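/- arXiv:math/9509203 — 6 statements merged into one kernel-verified Lean document; each statement's English description precedes it below -/
import Mathlib

section
/- Let G ⊆ ℂ^n be an n-circled domain, p ∈ [1,+∞), and let f be holomorphic on G with f ∈ L^p(G, Λ_{2n}). Then for every ν ∈ ℤ^n, ∫_G |a_ν(f) z^ν|^p dΛ_{2n}(z) ≤ ∫_G |f|^p dΛ_{2n}. In particular, if f ≢ 0, then there exists ν_0 ∈ ℤ^n such that the monomial z^{ν_0} is holomorphic on G (i.e., z_j ≠ 0 on G whenever ν_{0,j} < 0) and z^{ν_0} ∈ L^p(G, Λ_{2n}). -/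
open MeasureTheory Filter Topology Set
open scoped ENNReal

noncomputable section

/-- Complex partial derivative in direction `j`. -/
def pd (n : ℕ) (j : Fin n) (f : (Fin n → ℂ) → ℂ) : (Fin n → ℂ) → ℂ :=
  fun z => fderiv ℂ f z (Pi.single j 1)

/-- Mixed partial derivative `∂^ν`. -/
def pdM (n : ℕ) (ν : Fin n → ℕ) (f : (Fin n → ℂ) → ℂ) : (Fin n → ℂ) → ℂ :=
  (List.finRange n).foldr (fun j g => (pd n j)^[ν j] g) f

/-- A domain: a nonempty open connected set. -/
def IsDomainSet {n : ℕ} (G : Set (Fin n → ℂ)) : Prop :=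
  IsOpen G ∧ IsConnected G

/-- `G` is `n`-circled. -/
def IsCircled {n : ℕ} (G : Set (Fin n → ℂ)) : Prop :=
  ∀ z ∈ G, ∀ θ : Fin n → ℝ, (fun j => Complex.exp ((θ j : ℂ) * Complex.I) * z j) ∈ G

/-- `G` is an `F`-domain of holomorphy. -/
def IsDomainOfHolomorphyFor {n : ℕ} (G : Set (Fin n → ℂ))
    (F : Set ((Fin n → ℂ) → ℂ)) : Prop :=
  ¬ ∃ G₀ Gt : Set (Fin n → ℂ), IsDomainSet G₀ ∧ IsDomainSet Gt ∧ G₀.Nonempty ∧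
      G₀ ⊆ G ∩ Gt ∧ ¬ Gt ⊆ G ∧
      ∀ f ∈ F, ∃ ft : (Fin n → ℂ) → ℂ, DifferentiableOn ℂ ft Gt ∧ EqOn ft f G₀

/-- `G` is a domain of holomorphy. -/
def IsDomainOfHolomorphy {n : ℕ} (G : Set (Fin n → ℂ)) : Prop :=
  IsDomainOfHolomorphyFor G {f | DifferentiableOn ℂ f G}

/-- `G` is fat. -/
def IsFat {n : ℕ} (G : Set (Fin n → ℂ)) : Prop :=
  G = interior (closure G)

/-- `log G`. -/
def logSet {n : ℕ} (G : Set (Fin n → ℂ)) : Set (Fin n → ℝ) :=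
  {x | (fun j => (Real.exp (x j) : ℂ)) ∈ G}

/-- The largest vector subspace `F` with `X + F = X` (for a convex domain `X`). -/
def ESpace {n : ℕ} (X : Set (Fin n → ℝ)) : Set (Fin n → ℝ) :=
  {v | ∀ x ∈ X, ∀ t : ℝ, x + t • v ∈ X}

/-- A subspace (given as a set) is of rational type: it is spanned by its integer points. -/
def IsRationalType {n : ℕ} (F : Set (Fin n → ℝ)) : Prop :=
  (Submodule.span ℝ (F ∩ {x | ∀ j, ∃ m : ℤ, x j = (m : ℝ)}) : Set (Fin n → ℝ)) = F

/-- Bounded holomorphic functions on `G`. -/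
def Hinf {n : ℕ} (G : Set (Fin n → ℂ)) : Set ((Fin n → ℂ) → ℂ) :=
  {f | DifferentiableOn ℂ f G ∧ ∃ C : ℝ, ∀ z ∈ G, ‖f z‖ ≤ C}

/-- `L_h^{p,k}(G)`. -/
def LhPK {n : ℕ} (G : Set (Fin n → ℂ)) (p : ℝ≥0∞) (k : ℕ) :
    Set ((Fin n → ℂ) → ℂ) :=
  {f | DifferentiableOn ℂ f G ∧ ∀ ν : Fin n → ℕ, (∑ j, ν j) ≤ k →
      MemLp (pdM n ν f) p (volume.restrict G)}

/-- `L_h^{⋄,k}(G) = ⋂_{p ∈ [1,∞]} L_h^{p,k}(G)`. -/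
def LhDiaK {n : ℕ} (G : Set (Fin n → ℂ)) (k : ℕ) : Set ((Fin n → ℂ) → ℂ) :=
  {f | ∀ p : ℝ≥0∞, 1 ≤ p → f ∈ LhPK G p k}

/-- `A^k(G)`. -/
def Ak {n : ℕ} (G : Set (Fin n → ℂ)) (k : ℕ) : Set ((Fin n → ℂ) → ℂ) :=
  {f | DifferentiableOn ℂ f G ∧ ∀ ν : Fin n → ℕ, (∑ j, ν j) ≤ k →
      ∃ g : (Fin n → ℂ) → ℂ, ContinuousOn g (closure G) ∧ EqOn g (pdM n ν f) G}

/-- `A^∞(G)`. -/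
def Ainf {n : ℕ} (G : Set (Fin n → ℂ)) : Set ((Fin n → ℂ) → ℂ) :=
  {f | DifferentiableOn ℂ f G ∧ ∀ ν : Fin n → ℕ,
      ∃ g : (Fin n → ℂ) → ℂ, ContinuousOn g (closure G) ∧ EqOn g (pdM n ν f) G}

/-- `H^{∞,k}(G)`. -/
def HinfK {n : ℕ} (G : Set (Fin n → ℂ)) (k : ℕ) : Set ((Fin n → ℂ) → ℂ) :=
  {f | DifferentiableOn ℂ f G ∧ ∀ ν : Fin n → ℕ, (∑ j, ν j) ≤ k →
      ∃ C : ℝ, ∀ z ∈ G, ‖pdM n ν f z‖ ≤ C}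

/-- The class `S(G)`. -/
def Sclass {n : ℕ} (G : Set (Fin n → ℂ)) : Set ((Fin n → ℂ) → ℂ) :=
  {f | DifferentiableOn ℂ f G ∧ ∀ K : Set (Fin n → ℂ), IsCompact K → K ⊆ closure G →
      ∀ ν : Fin n → ℕ, ∃ C : ℝ, ∀ z ∈ K ∩ G, ‖pdM n ν f z‖ ≤ C}

/-- `O(cl G)`: functions on `G` extending holomorphically to a neighbourhood of `cl G`. -/
def Ocl {n : ℕ} (G : Set (Fin n → ℂ)) : Set ((Fin n → ℂ) → ℂ) :=
  {f | ∃ U : Set (Fin n → ℂ), IsOpen U ∧ closure G ⊆ U ∧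
      ∃ g : (Fin n → ℂ) → ℂ, DifferentiableOn ℂ g U ∧ EqOn f g G}

/-- `V_ε`. -/
def Veps {n : ℕ} (ε : Fin n → Bool) : Set (Fin n → ℂ) :=
  {z | ∀ j, (ε j = true → z j = 0) ∧ (ε j = false → z j ≠ 0)}

/-- `G_ε`. -/
def Geps {n : ℕ} (G : Set (Fin n → ℂ)) (ε : Fin n → Bool) : Set (Fin n → ℂ) :=
  {w | ∃ lam z : Fin n → ℂ, (∀ j, ‖lam j‖ ≤ 1) ∧ z ∈ G ∧
      w = fun j => (if ε j then lam j else 1) * z j}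

/-- The `n`-circled set `{|z^α| < c}`. -/
def monomialLt {n : ℕ} (α : Fin n → ℤ) (c : ℝ) : Set (Fin n → ℂ) :=
  {z | ∏ j ∈ Finset.univ.filter (fun j => 0 < α j), ‖z j‖ ^ (α j).toNat
     < c * ∏ j ∈ Finset.univ.filter (fun j => α j < 0), ‖z j‖ ^ (-(α j)).toNat}

/-- `f` has Laurent expansion on `G` with coefficients `a`. -/
def HasLaurent {n : ℕ} (G : Set (Fin n → ℂ)) (f : (Fin n → ℂ) → ℂ)
    (a : (Fin n → ℤ) → ℂ) : Prop :=
  ∀ z ∈ G, HasSum (fun ν : Fin n → ℤ => a ν * ∏ j, z j ^ ν j) (f z)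


namespace Stmt9Aux
open Complex
variable {n : ℕ}
def Rot (θ : Fin n → ℝ) (z : Fin n → ℂ) : Fin n → ℂ :=
  fun j => Complex.exp ((θ j : ℂ) * Complex.I) * z j

lemma rot_measurePreserving (θ : Fin n → ℝ) :
    MeasurePreserving (Rot θ) volume volume :=
  volume_preserving_pi (fun j => (rotation (Circle.exp (θ j))).measurePreserving)

lemma rot_rot_neg (θ : Fin n → ℝ) (z : Fin n → ℂ) : Rot (-θ) (Rot θ z) = z := by
  funext j
  simp only [Rot, Pi.neg_apply, Complex.ofReal_neg, ← mul_assoc, ← Complex.exp_add]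
  ring_nf
  simp

lemma rot_preimage {G : Set (Fin n → ℂ)}
    (hcirc : ∀ z ∈ G, ∀ θ : Fin n → ℝ, (fun j => Complex.exp ((θ j : ℂ) * Complex.I) * z j) ∈ G)
    (θ : Fin n → ℝ) : Rot θ ⁻¹' G = G := by
  ext z
  constructor
  · intro hz
    have h2 : Rot (-θ) (Rot θ z) ∈ G := hcirc _ hz (-θ)
    rwa [rot_rot_neg] at h2
  · intro hz
    exact hcirc _ hz θ

lemma term_eq (a : (Fin n → ℤ) → ℂ) (ν μ : Fin n → ℤ) (z : Fin n → ℂ) (θ : Fin n → ℝ) :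
    Complex.exp (-(∑ j, (ν j : ℂ) * (θ j : ℝ)) * Complex.I) * (a μ * ∏ j, (Rot θ z) j ^ μ j)
      = (a μ * ∏ j, z j ^ μ j) *
        ∏ j, Complex.exp (((μ j - ν j : ℤ) : ℂ) * (θ j : ℝ) * Complex.I) := by
  have e1 : ∀ j, ((Rot θ z) j) ^ μ j
      = Complex.exp ((μ j : ℂ) * ((θ j : ℝ) * Complex.I)) * z j ^ μ j := by
    intro j
    rw [Rot, mul_zpow, ← Complex.exp_int_mul]
  simp_rw [e1, Finset.prod_mul_distrib, ← Complex.exp_sum]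
  have e2 : ∑ j, ((μ j - ν j : ℤ) : ℂ) * (θ j : ℝ) * Complex.I
      = ∑ j, (μ j : ℂ) * ((θ j : ℝ) * Complex.I) + -(∑ j, (ν j : ℂ) * (θ j : ℝ)) * Complex.I := by
    rw [neg_mul, Finset.sum_mul, ← sub_eq_add_neg, ← Finset.sum_sub_distrib]
    refine Finset.sum_congr rfl fun j _ => ?_
    push_cast
    ring
  rw [e2, Complex.exp_add]
  ring

def Box (n : ℕ) : Set (Fin n → ℝ) := Set.univ.pi fun _ => Set.Ioc 0 (2 * Real.pi)

lemma measurableSet_box : MeasurableSet (Box n) :=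
  MeasurableSet.univ_pi fun _ => measurableSet_Ioc

lemma volume_box : volume (Box n) = (ENNReal.ofReal (2 * Real.pi)) ^ n := by
  rw [Box, volume_pi_pi]
  simp [Real.volume_Ioc]

lemma integral_char (m : ℤ) :
    ∫ t in Set.Ioc (0:ℝ) (2 * Real.pi), Complex.exp ((m : ℂ) * (t : ℝ) * Complex.I) =
      if m = 0 then ((2 * Real.pi : ℝ) : ℂ) else 0 := by
  rcases eq_or_ne m 0 with hm | hm
  · simp [hm, Real.volume_Ioc, Real.two_pi_pos.le]
  · rw [if_neg hm, ← intervalIntegral.integral_of_le Real.two_pi_pos.le]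
    have h1 : ∀ t : ℝ, (m : ℂ) * (t : ℝ) * Complex.I = ((m : ℂ) * Complex.I) * t := by
      intro t; ring
    simp_rw [h1]
    rw [integral_exp_mul_complex (by simp [hm, Complex.I_ne_zero])]
    have : ((m : ℂ) * Complex.I) * (2 * Real.pi : ℝ) = m * (2 * Real.pi * Complex.I) := by
      push_cast; ring
    rw [this, Complex.exp_int_mul_two_pi_mul_I]
    simp

lemma prod_indicator' (h : Fin n → ℝ → ℂ) (θ : Fin n → ℝ) :
    ∏ j, (Set.Ioc (0:ℝ) (2 * Real.pi)).indicator (h j) (θ j) =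
      (Box n).indicator (fun θ => ∏ j, h j (θ j)) θ := by
  by_cases hθ : θ ∈ Box n
  · rw [Set.indicator_of_mem hθ]
    refine Finset.prod_congr rfl fun j _ => ?_
    exact Set.indicator_of_mem (hθ j (Set.mem_univ j)) _
  · rw [Set.indicator_of_notMem hθ]
    have : ∃ j, θ j ∉ Set.Ioc (0:ℝ) (2 * Real.pi) := by
      by_contra hc
      push_neg at hc
      exact hθ fun j _ => hc j
    obtain ⟨j, hj⟩ := this
    exact Finset.prod_eq_zero (Finset.mem_univ j) (Set.indicator_of_notMem hj _)

lemma integral_box_prod (h : Fin n → ℝ → ℂ) :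
    ∫ θ in Box n, ∏ j, h j (θ j) =
      ∏ j, ∫ t in Set.Ioc (0:ℝ) (2 * Real.pi), h j t := by
  rw [← MeasureTheory.integral_indicator measurableSet_box]
  have e : (Box n).indicator (fun θ => ∏ j, h j (θ j)) =
      fun θ : Fin n → ℝ => ∏ j, (Set.Ioc (0:ℝ) (2 * Real.pi)).indicator (h j) (θ j) := by
    funext θ; rw [← prod_indicator']
  rw [e, volume_pi, MeasureTheory.integral_fintype_prod_eq_prod
    (f := fun j => (Set.Ioc (0:ℝ) (2 * Real.pi)).indicator (h j))]
  refine Finset.prod_congr rfl fun j _ => ?_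
  rw [MeasureTheory.integral_indicator measurableSet_Ioc]

lemma key {G : Set (Fin n → ℂ)}
    (hcirc : ∀ z ∈ G, ∀ θ : Fin n → ℝ,
      (fun j => Complex.exp ((θ j : ℂ) * Complex.I) * z j) ∈ G)
    {f : (Fin n → ℂ) → ℂ} {a : (Fin n → ℤ) → ℂ}
    (ha : ∀ z ∈ G, HasSum (fun ν : Fin n → ℤ => a ν * ∏ j, z j ^ ν j) (f z))
    (ν : Fin n → ℤ) {z : Fin n → ℂ} (hz : z ∈ G) :
    ∫ θ in Box n, Complex.exp (-(∑ j, (ν j : ℂ) * (θ j : ℝ)) * Complex.I) * f (Rot θ z)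
      = ((2 * Real.pi : ℝ) : ℂ) ^ n * (a ν * ∏ j, z j ^ ν j) := by
  set c : (Fin n → ℤ) → ℂ := fun μ => a μ * ∏ j, z j ^ μ j with hc
  set T : (Fin n → ℤ) → (Fin n → ℝ) → ℂ :=
    fun μ θ => ∏ j, Complex.exp (((μ j - ν j : ℤ) : ℂ) * (θ j : ℝ) * Complex.I) with hT
  have hsum : ∀ θ : Fin n → ℝ,
      HasSum (fun μ => c μ * T μ θ)
        (Complex.exp (-(∑ j, (ν j : ℂ) * (θ j : ℝ)) * Complex.I) * f (Rot θ z)) := by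
    intro θ
    have hmem : Rot θ z ∈ G := hcirc z hz θ
    have h0 := (ha _ hmem).mul_left
      (Complex.exp (-(∑ j, (ν j : ℂ) * (θ j : ℝ)) * Complex.I))
    have h1 : (fun μ : Fin n → ℤ => Complex.exp (-(∑ j, (ν j : ℂ) * (θ j : ℝ)) * Complex.I) *
        (a μ * ∏ j, (Rot θ z) j ^ μ j)) = fun μ => c μ * T μ θ :=
      funext fun μ => term_eq a ν μ z θ
    rwa [h1] at h0
  have hsn : Summable fun μ : Fin n → ℤ => ‖c μ‖ :=
    summable_norm_iff.mpr (ha z hz).summable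
  have hTnorm : ∀ (μ : Fin n → ℤ) (θ : Fin n → ℝ), ‖c μ * T μ θ‖ = ‖c μ‖ := by
    intro μ θ
    rw [norm_mul, hT, norm_prod]
    simp [Complex.norm_exp]
  have hmeas : ∀ μ : Fin n → ℤ, AEStronglyMeasurable (fun θ : Fin n → ℝ => c μ * T μ θ)
      (volume.restrict (Box n)) := by
    intro μ
    refine Continuous.aestronglyMeasurable ?_
    refine continuous_const.mul (continuous_finset_prod _ fun j _ => ?_)
    exact Complex.continuous_exp.comp
      ((continuous_const.mul ((Complex.continuous_ofReal.comp (continuous_apply j)))).mul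
        continuous_const)
  have hlint : ∑' μ : Fin n → ℤ, ∫⁻ θ in Box n, ‖c μ * T μ θ‖₊ ≠ ⊤ := by
    have e : ∀ μ : Fin n → ℤ, ∫⁻ θ in Box n, ‖c μ * T μ θ‖₊
        = (‖c μ‖₊ : ℝ≥0∞) * volume (Box n) := by
      intro μ
      have : (fun θ : Fin n → ℝ => (‖c μ * T μ θ‖₊ : ℝ≥0∞)) = fun _ => (‖c μ‖₊ : ℝ≥0∞) := by
        funext θ
        congr 1
        ext
        exact hTnorm μ θ
      rw [this, MeasureTheory.lintegral_const]
      simp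
    simp_rw [e]
    rw [ENNReal.tsum_mul_right]
    refine ENNReal.mul_ne_top ?_ ?_
    · rw [ENNReal.tsum_coe_ne_top_iff_summable]
      exact NNReal.summable_coe.mp (by simpa using hsn)
    · rw [volume_box]
      exact ENNReal.pow_ne_top ENNReal.ofReal_ne_top
  have hint : ∀ μ : Fin n → ℤ, (∫ θ in Box n, c μ * T μ θ)
      = if μ = ν then ((2 * Real.pi : ℝ) : ℂ) ^ n * c ν else 0 := by
    intro μ
    rw [integral_const_mul, hT]
    rw [integral_box_prod (fun j t => Complex.exp (((μ j - ν j : ℤ) : ℂ) * (t : ℝ) * Complex.I))]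
    have e : ∀ j : Fin n, (∫ t in Set.Ioc (0:ℝ) (2 * Real.pi),
        Complex.exp (((μ j - ν j : ℤ) : ℂ) * (t : ℝ) * Complex.I))
        = if μ j - ν j = 0 then ((2 * Real.pi : ℝ) : ℂ) else 0 := fun j => integral_char _
    simp_rw [e]
    rcases eq_or_ne μ ν with h | h
    · subst h
      simp [Finset.prod_const, mul_comm]
    · rw [if_neg h]
      have : ∃ j, μ j ≠ ν j := by
        by_contra hc
        push_neg at hc
        exact h (funext hc)
      obtain ⟨j, hj⟩ := this
      rw [Finset.prod_eq_zero (Finset.mem_univ j) (by simp [sub_eq_zero, hj]), mul_zero]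
  have e0 : (fun θ : Fin n → ℝ =>
      Complex.exp (-(∑ j, (ν j : ℂ) * (θ j : ℝ)) * Complex.I) * f (Rot θ z))
      = fun θ => ∑' μ : Fin n → ℤ, c μ * T μ θ :=
    funext fun θ => ((hsum θ).tsum_eq).symm
  rw [e0, MeasureTheory.integral_tsum hmeas hlint]
  simp_rw [hint]
  rw [tsum_ite_eq]

lemma measurable_indicator_of_continuousOn {G : Set (Fin n → ℂ)} (hG : IsOpen G)
    {f : (Fin n → ℂ) → ℂ} (hf : ContinuousOn f G) : Measurable (G.indicator f) := by
  classical
  have h := ContinuousOn.measurable_piecewise (g := fun _ => (0:ℂ)) hf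
    continuousOn_const hG.measurableSet
  rw [← Set.piecewise_eq_indicator]
  exact h

lemma lint_rot {G : Set (Fin n → ℂ)} (hG : IsOpen G)
    (hcirc : ∀ z ∈ G, ∀ θ : Fin n → ℝ,
      (fun j => Complex.exp ((θ j : ℂ) * Complex.I) * z j) ∈ G)
    {f : (Fin n → ℂ) → ℂ} (hfc : ContinuousOn f G) (p : ℝ) (θ : Fin n → ℝ) :
    ∫⁻ z in G, (‖f (Rot θ z)‖₊ : ℝ≥0∞) ^ p = ∫⁻ z in G, (‖f z‖₊ : ℝ≥0∞) ^ p := by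
  set F : (Fin n → ℂ) → ℝ≥0∞ := fun z => (‖G.indicator f z‖₊ : ℝ≥0∞) ^ p with hF
  have hFm : Measurable F :=
    ((measurable_indicator_of_continuousOn hG hfc).nnnorm.coe_nnreal_ennreal).pow_const p
  have h1 : ∫⁻ z in G, (‖f (Rot θ z)‖₊ : ℝ≥0∞) ^ p = ∫⁻ z in G, F (Rot θ z) := by
    refine setLIntegral_congr_fun hG.measurableSet (fun z hz => ?_)
    have hm : Rot θ z ∈ G := hcirc z hz θ
    simp [hF, Set.indicator_of_mem hm]
  have h2 : ∫⁻ z in G, F z = ∫⁻ z in G, (‖f z‖₊ : ℝ≥0∞) ^ p := by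
    refine setLIntegral_congr_fun hG.measurableSet (fun z hz => ?_)
    simp [hF, Set.indicator_of_mem hz]
  rw [h1, ← h2]
  have h3 : ∫⁻ z in G, F z = ∫⁻ z in G, F z ∂(Measure.map (Rot θ) volume) := by
    rw [(rot_measurePreserving θ).map_eq]
  rw [h3, MeasureTheory.setLIntegral_map hG.measurableSet hFm (rot_measurePreserving θ).measurable,
    rot_preimage hcirc θ]

lemma jensen_aux {α : Type*} [MeasurableSpace α] (μ : Measure α) {h : α → ℝ≥0∞}
    (hm : AEMeasurable h μ) {p : ℝ} (hp : 1 ≤ p) :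
    (∫⁻ x, h x ∂μ) ^ p ≤ (∫⁻ x, h x ^ p ∂μ) * (μ Set.univ) ^ (p - 1) := by
  rcases eq_or_lt_of_le hp with hp1 | hp1
  · subst hp1
    simp
  · have hpq := Real.HolderConjugate.conjExponent hp1
    have h0 := ENNReal.lintegral_mul_le_Lp_mul_Lq μ hpq hm
      (aemeasurable_const (b := (1:ℝ≥0∞)))
    simp only [Pi.mul_apply, mul_one, ENNReal.one_rpow, lintegral_const] at h0
    have hppos : (0:ℝ) < p := lt_trans one_pos hp1
    have h1 := ENNReal.rpow_le_rpow h0 hppos.le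
    rw [ENNReal.mul_rpow_of_nonneg _ _ hppos.le, ← ENNReal.rpow_mul, ← ENNReal.rpow_mul,
      one_div_mul_cancel hppos.ne', ENNReal.rpow_one] at h1
    have hq : (1 / Real.conjExponent p) * p = p - 1 := by
      rw [Real.conjExponent]
      field_simp
    rw [hq] at h1
    simpa [one_mul] using h1

lemma meas_g {G : Set (Fin n → ℂ)} (hG : IsOpen G)
    (hcirc : ∀ z ∈ G, ∀ θ : Fin n → ℝ,
      (fun j => Complex.exp ((θ j : ℂ) * Complex.I) * z j) ∈ G)
    {f : (Fin n → ℂ) → ℂ} (hfc : ContinuousOn f G) {z : Fin n → ℂ} (hz : z ∈ G) :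
    Measurable fun θ : Fin n → ℝ => (‖f (Rot θ z)‖₊ : ℝ≥0∞) := by
  have e : (fun θ : Fin n → ℝ => (‖f (Rot θ z)‖₊ : ℝ≥0∞))
      = fun θ => (‖G.indicator f (Rot θ z)‖₊ : ℝ≥0∞) := by
    funext θ
    have hm : Rot θ z ∈ G := hcirc z hz θ
    rw [Set.indicator_of_mem hm]
  rw [e]
  have hrot : Continuous fun θ : Fin n → ℝ => Rot θ z := by
    refine continuous_pi fun j => Continuous.mul ?_ continuous_const
    exact Complex.continuous_exp.comp
      ((Complex.continuous_ofReal.comp (continuous_apply j)).mul continuous_const)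
  exact ((measurable_indicator_of_continuousOn hG hfc).comp hrot.measurable).nnnorm.coe_nnreal_ennreal

lemma keyP {G : Set (Fin n → ℂ)} (hG : IsOpen G)
    (hcirc : ∀ z ∈ G, ∀ θ : Fin n → ℝ,
      (fun j => Complex.exp ((θ j : ℂ) * Complex.I) * z j) ∈ G)
    {f : (Fin n → ℂ) → ℂ} {a : (Fin n → ℤ) → ℂ} (hfc : ContinuousOn f G)
    (ha : ∀ z ∈ G, HasSum (fun ν : Fin n → ℤ => a ν * ∏ j, z j ^ ν j) (f z))
    {p : ℝ} (hp : 1 ≤ p) (ν : Fin n → ℤ) {z : Fin n → ℂ} (hz : z ∈ G) :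
    (‖a ν * ∏ j, z j ^ ν j‖₊ : ℝ≥0∞) ^ p * volume (Box n)
      ≤ ∫⁻ θ in Box n, (‖f (Rot θ z)‖₊ : ℝ≥0∞) ^ p := by
  set V : ℝ≥0∞ := volume (Box n) with hV
  have hV0 : V ≠ 0 := by
    rw [hV, volume_box]
    exact (pow_ne_zero _ (by simp [Real.two_pi_pos, Real.pi_pos]))
  have hVt : V ≠ ⊤ := by
    rw [hV, volume_box]
    exact ENNReal.pow_ne_top ENNReal.ofReal_ne_top
  set A : ℝ≥0∞ := (‖a ν * ∏ j, z j ^ ν j‖₊ : ℝ≥0∞) with hA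
  set g : (Fin n → ℝ) → ℝ≥0∞ := fun θ => (‖f (Rot θ z)‖₊ : ℝ≥0∞) with hg
  have hgm : Measurable g := meas_g hG hcirc hfc hz
  -- Step 1 : A * V ≤ ∫⁻ g
  have h1 : A * V ≤ ∫⁻ θ in Box n, g θ := by
    have hkey := key hcirc ha ν hz
    have hnorm : (‖((2 * Real.pi : ℝ) : ℂ) ^ n * (a ν * ∏ j, z j ^ ν j)‖₊ : ℝ≥0∞) = V * A := by
      rw [nnnorm_mul, nnnorm_pow, ENNReal.coe_mul, ENNReal.coe_pow, hV, volume_box, hA]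
      congr 2
      rw [Complex.nnnorm_real]
      exact Real.enorm_eq_ofReal Real.two_pi_pos.le
    calc A * V = (‖((2 * Real.pi : ℝ) : ℂ) ^ n * (a ν * ∏ j, z j ^ ν j)‖₊ : ℝ≥0∞) := by
          rw [hnorm, mul_comm]
      _ = ‖∫ θ in Box n, Complex.exp (-(∑ j, (ν j : ℂ) * (θ j : ℝ)) * Complex.I)
            * f (Rot θ z)‖₊ := by rw [hkey]
      _ ≤ ∫⁻ θ in Box n, ‖Complex.exp (-(∑ j, (ν j : ℂ) * (θ j : ℝ)) * Complex.I)
            * f (Rot θ z)‖₊ := MeasureTheory.enorm_integral_le_lintegral_enorm _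
      _ = ∫⁻ θ in Box n, g θ := by
          refine lintegral_congr fun θ => ?_
          rw [hg]
          congr 1
          rw [nnnorm_mul]
          have e2 : -(∑ j, (ν j : ℂ) * (θ j : ℝ)) = ((-(∑ j, (ν j : ℝ) * θ j) : ℝ) : ℂ) := by
            push_cast
            ring
          have hnrm : ‖Complex.exp (-(∑ j, (ν j : ℂ) * (θ j : ℝ)) * Complex.I)‖ = 1 := by
            rw [e2, Complex.norm_exp_ofReal_mul_I]
          have : ‖Complex.exp (-(∑ j, (ν j : ℂ) * (θ j : ℝ)) * Complex.I)‖₊ = 1 :=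
            NNReal.coe_injective (by simpa using hnrm)
          rw [this, one_mul]
  -- Step 2 : Jensen
  have h2 : (∫⁻ θ in Box n, g θ) ^ p ≤ (∫⁻ θ in Box n, g θ ^ p) * V ^ (p - 1) := by
    have := jensen_aux (volume.restrict (Box n)) (hgm.aemeasurable) hp
    simpa [Measure.restrict_apply_univ] using this
  have hppos : (0:ℝ) < p := lt_of_lt_of_le one_pos hp
  have h3 : (A * V) ^ p ≤ (∫⁻ θ in Box n, g θ ^ p) * V ^ (p - 1) :=
    le_trans (ENNReal.rpow_le_rpow h1 hppos.le) h2
  rw [ENNReal.mul_rpow_of_nonneg _ _ hppos.le] at h3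
  have hVp : V ^ p = V ^ (p - 1) * V := by
    have e3 : V ^ (p-1) * V ^ (1:ℝ) = V ^ p := by
      rw [← ENNReal.rpow_add_of_nonneg (p-1) 1 (by linarith) zero_le_one]
      norm_num
    rw [← e3, ENNReal.rpow_one]
  rw [hVp, ← mul_assoc, mul_comm (A ^ p) (V ^ (p-1)), mul_assoc] at h3
  have hc1 : V ^ (p - 1) ≠ 0 := by
    simp [ENNReal.rpow_eq_zero_iff, hV0, hVt]
  have hc2 : V ^ (p - 1) ≠ ⊤ := by
    simp [ENNReal.rpow_eq_top_iff, hV0, hVt]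
  rw [mul_comm ((∫⁻ θ in Box n, g θ ^ p)) (V ^ (p-1))] at h3
  exact (ENNReal.mul_le_mul_iff_right hc1 hc2).mp (by simpa using h3)

lemma part1 {G : Set (Fin n → ℂ)} (hG : IsOpen G)
    (hcirc : ∀ z ∈ G, ∀ θ : Fin n → ℝ,
      (fun j => Complex.exp ((θ j : ℂ) * Complex.I) * z j) ∈ G)
    {f : (Fin n → ℂ) → ℂ} {a : (Fin n → ℤ) → ℂ} (hfc : ContinuousOn f G)
    (ha : ∀ z ∈ G, HasSum (fun ν : Fin n → ℤ => a ν * ∏ j, z j ^ ν j) (f z))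
    {p : ℝ} (hp : 1 ≤ p) (ν : Fin n → ℤ) :
    ∫⁻ z in G, (‖a ν * ∏ j, z j ^ ν j‖₊ : ℝ≥0∞) ^ p
      ≤ ∫⁻ z in G, (‖f z‖₊ : ℝ≥0∞) ^ p := by
  set V : ℝ≥0∞ := volume (Box n) with hV
  have hV0 : V ≠ 0 := by
    rw [hV, volume_box]
    exact (pow_ne_zero _ (by simp [Real.two_pi_pos, Real.pi_pos]))
  have hVt : V ≠ ⊤ := by
    rw [hV, volume_box]
    exact ENNReal.pow_ne_top ENNReal.ofReal_ne_top
  set F : (Fin n → ℂ) → (Fin n → ℝ) → ℝ≥0∞ :=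
    fun z θ => (‖f (Rot θ z)‖₊ : ℝ≥0∞) ^ p with hF
  -- measurability of (z, θ) ↦ F z θ on the product restricted measure
  have hrotc : Continuous fun q : (Fin n → ℂ) × (Fin n → ℝ) => Rot q.2 q.1 := by
    refine continuous_pi fun j => Continuous.mul ?_ ((continuous_apply j).comp continuous_fst)
    exact Complex.continuous_exp.comp
      ((Complex.continuous_ofReal.comp ((continuous_apply j).comp continuous_snd)).mul
        continuous_const)
  have hFmeas : AEMeasurable (Function.uncurry F)
      ((volume.restrict G).prod (volume.restrict (Box n))) := by
    have hglob : Measurable fun q : (Fin n → ℂ) × (Fin n → ℝ) =>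
        (‖G.indicator f (Rot q.2 q.1)‖₊ : ℝ≥0∞) ^ p :=
      ((((measurable_indicator_of_continuousOn hG
        hfc).comp hrotc.measurable).nnnorm).coe_nnreal_ennreal).pow_const p
    refine hglob.aemeasurable.congr ?_
    have hmem : ∀ᵐ q ∂((volume.restrict G).prod (volume.restrict (Box n))),
        q ∈ G ×ˢ Box n := by
      rw [Measure.prod_restrict]
      exact ae_restrict_mem ((hG.measurableSet).prod measurableSet_box)
    refine hmem.mono fun q hq => ?_
    have hz : Rot q.2 q.1 ∈ G := hcirc q.1 hq.1 q.2
    simp only [Function.uncurry, hF]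
    rw [Set.indicator_of_mem hz]
  have step1 : (∫⁻ z in G, (‖a ν * ∏ j, z j ^ ν j‖₊ : ℝ≥0∞) ^ p) * V
      ≤ ∫⁻ z in G, ∫⁻ θ in Box n, F z θ := by
    rw [← MeasureTheory.lintegral_mul_const' V _ hVt]
    refine lintegral_mono_ae ((ae_restrict_iff' hG.measurableSet).mpr
      (MeasureTheory.ae_of_all _ fun z hz => ?_))
    exact keyP hG hcirc hfc ha hp ν hz
  have step2 : ∫⁻ z in G, ∫⁻ θ in Box n, F z θ
      = ∫⁻ θ in Box n, ∫⁻ z in G, F z θ := lintegral_lintegral_swap hFmeas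
  have step3 : ∫⁻ θ in Box n, ∫⁻ z in G, F z θ = V * ∫⁻ z in G, (‖f z‖₊ : ℝ≥0∞) ^ p := by
    have e : ∀ θ : Fin n → ℝ, ∫⁻ z in G, F z θ = ∫⁻ z in G, (‖f z‖₊ : ℝ≥0∞) ^ p :=
      fun θ => lint_rot hG hcirc hfc p θ
    rw [lintegral_congr e, MeasureTheory.lintegral_const, Measure.restrict_apply_univ, mul_comm]
  have : (∫⁻ z in G, (‖a ν * ∏ j, z j ^ ν j‖₊ : ℝ≥0∞) ^ p) * V
      ≤ (∫⁻ z in G, (‖f z‖₊ : ℝ≥0∞) ^ p) * V := by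
    rw [mul_comm (∫⁻ z in G, (‖f z‖₊ : ℝ≥0∞) ^ p) V]
    exact step1.trans (step2.trans_le step3.le)
  exact (ENNReal.mul_le_mul_iff_left hV0 hVt).mp this

lemma coeff_bound {G : Set (Fin n → ℂ)} (hG : IsOpen G)
    (hcirc : ∀ z ∈ G, ∀ θ : Fin n → ℝ,
      (fun j => Complex.exp ((θ j : ℂ) * Complex.I) * z j) ∈ G)
    {f : (Fin n → ℂ) → ℂ} {a : (Fin n → ℤ) → ℂ} (hfc : ContinuousOn f G)
    (ha : ∀ z ∈ G, HasSum (fun ν : Fin n → ℤ => a ν * ∏ j, z j ^ ν j) (f z))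
    {p : ℝ} (hp : 1 ≤ p) (ν : Fin n → ℤ) {z : Fin n → ℂ} (hz : z ∈ G)
    {M : ℝ} (hM0 : 0 ≤ M)
    (hM : ∀ θ ∈ Box n, ‖f (Rot θ z)‖ ≤ M) :
    ‖a ν * ∏ j, z j ^ ν j‖ ≤ M := by
  have hppos : (0:ℝ) < p := lt_of_lt_of_le one_pos hp
  have hV0 : volume (Box n) ≠ 0 := by
    rw [volume_box]
    exact (pow_ne_zero _ (by simp [Real.two_pi_pos, Real.pi_pos]))
  have hVt : volume (Box n) ≠ ⊤ := by
    rw [volume_box]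
    exact ENNReal.pow_ne_top ENNReal.ofReal_ne_top
  have h1 := keyP hG hcirc hfc ha hp ν hz
  have h2 : ∫⁻ θ in Box n, (‖f (Rot θ z)‖₊ : ℝ≥0∞) ^ p
      ≤ (M.toNNReal : ℝ≥0∞) ^ p * volume (Box n) := by
    have hpt : ∀ θ ∈ Box n, (‖f (Rot θ z)‖₊ : ℝ≥0∞) ^ p ≤ (M.toNNReal : ℝ≥0∞) ^ p := by
      intro θ hθ
      refine ENNReal.rpow_le_rpow ?_ hppos.le
      rw [ENNReal.coe_le_coe]
      exact (Real.le_toNNReal_iff_coe_le hM0).mpr (by simpa using hM θ hθ)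
    calc ∫⁻ θ in Box n, (‖f (Rot θ z)‖₊ : ℝ≥0∞) ^ p
        ≤ ∫⁻ _ in Box n, (M.toNNReal : ℝ≥0∞) ^ p :=
          lintegral_mono_ae ((ae_restrict_iff' measurableSet_box).mpr
            (MeasureTheory.ae_of_all _ hpt))
      _ = (M.toNNReal : ℝ≥0∞) ^ p * volume (Box n) := by
          rw [MeasureTheory.lintegral_const, Measure.restrict_apply_univ]
  have h3 : (‖a ν * ∏ j, z j ^ ν j‖₊ : ℝ≥0∞) ^ p * volume (Box n)
      ≤ (M.toNNReal : ℝ≥0∞) ^ p * volume (Box n) := le_trans h1 h2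
  have h4 : (‖a ν * ∏ j, z j ^ ν j‖₊ : ℝ≥0∞) ^ p ≤ (M.toNNReal : ℝ≥0∞) ^ p :=
    (ENNReal.mul_le_mul_iff_left hV0 hVt).mp h3
  have h5 : (‖a ν * ∏ j, z j ^ ν j‖₊ : ℝ≥0∞) ≤ (M.toNNReal : ℝ≥0∞) :=
    (ENNReal.rpow_le_rpow_iff hppos).mp h4
  have h6 : ‖a ν * ∏ j, z j ^ ν j‖₊ ≤ M.toNNReal := ENNReal.coe_le_coe.mp h5
  calc ‖a ν * ∏ j, z j ^ ν j‖ = (‖a ν * ∏ j, z j ^ ν j‖₊ : ℝ) := rfl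
    _ ≤ (M.toNNReal : ℝ) := by exact_mod_cast h6
    _ = M := Real.coe_toNNReal _ hM0

lemma coeff_vanish {G : Set (Fin n → ℂ)} (hG : IsOpen G)
    (hcirc : ∀ z ∈ G, ∀ θ : Fin n → ℝ,
      (fun j => Complex.exp ((θ j : ℂ) * Complex.I) * z j) ∈ G)
    {f : (Fin n → ℂ) → ℂ} {a : (Fin n → ℤ) → ℂ} (hfc : ContinuousOn f G)
    (ha : ∀ z ∈ G, HasSum (fun ν : Fin n → ℤ => a ν * ∏ j, z j ^ ν j) (f z))
    {p : ℝ} (hp : 1 ≤ p) (ν : Fin n → ℤ) (j : Fin n) (hν : ν j < 0)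
    {z₀ : Fin n → ℂ} (hz₀ : z₀ ∈ G) (hzj : z₀ j = 0) : a ν = 0 := by
  classical
  -- a closed ball around z₀ inside G
  obtain ⟨ε, hε, hball⟩ := Metric.isOpen_iff.mp hG z₀ hz₀
  set δ : ℝ := ε / 2 with hδdef
  have hδ : 0 < δ := by positivity
  have hballG : Metric.closedBall z₀ δ ⊆ G :=
    (Metric.closedBall_subset_ball (by simp [hδdef]; linarith)).trans hball
  -- compact set of all rotations of the closed ball
  have hcont : Continuous fun q : (Fin n → ℝ) × (Fin n → ℂ) => Rot q.1 q.2 := by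
    refine continuous_pi fun k => Continuous.mul ?_ ((continuous_apply k).comp continuous_snd)
    exact Complex.continuous_exp.comp
      ((Complex.continuous_ofReal.comp ((continuous_apply k).comp continuous_fst)).mul
        continuous_const)
  set K : Set (Fin n → ℂ) := (fun q : (Fin n → ℝ) × (Fin n → ℂ) => Rot q.1 q.2) ''
    ((Set.univ.pi fun _ => Set.Icc 0 (2 * Real.pi)) ×ˢ Metric.closedBall z₀ δ) with hK
  have hKcomp : IsCompact K :=
    (IsCompact.prod (isCompact_univ_pi fun _ => isCompact_Icc)
      (isCompact_closedBall _ _)).image hcont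
  have hKG : K ⊆ G := by
    rintro w ⟨⟨θ, u⟩, ⟨-, hu⟩, rfl⟩
    exact hcirc u (hballG hu) θ
  obtain ⟨M, hM⟩ := hKcomp.exists_bound_of_continuousOn (hfc.mono hKG)
  have hKne : (Rot 0 z₀) ∈ K := by
    refine ⟨⟨0, z₀⟩, ⟨?_, Metric.mem_closedBall_self hδ.le⟩, rfl⟩
    intro k _
    exact ⟨le_refl 0, Real.two_pi_pos.le⟩
  have hM0 : 0 ≤ M := le_trans (norm_nonneg _) (hM _ hKne)
  -- the points w t
  set u : Fin n → ℂ := fun k => if z₀ k = 0 then (δ : ℂ) else z₀ k with hu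
  have hu0 : ∀ k, u k ≠ 0 := by
    intro k
    rw [hu]
    by_cases h : z₀ k = 0 <;> simp [h, Complex.ofReal_ne_zero, hδ.ne']
  set C : ℝ := ∏ k ∈ Finset.univ.erase j, ‖u k‖ ^ ν k with hC
  have hC0 : 0 < C := Finset.prod_pos fun k _ => zpow_pos (norm_pos_iff.mpr (hu0 k)) _
  -- the key bound for all small t
  have hbound : ∀ t : ℝ, 0 < t → t ≤ δ → ‖a ν‖ * (t ^ ν j * C) ≤ M := by
    intro t ht htδ
    set w : Fin n → ℂ := fun k => if k = j then (t : ℂ) else u k with hw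
    have hwball : w ∈ Metric.closedBall z₀ δ := by
      rw [Metric.mem_closedBall, dist_pi_le_iff hδ.le]
      intro k
      rw [hw]
      by_cases hkj : k = j
      · subst hkj
        simp only [if_pos rfl]
        rw [Complex.dist_eq, hzj, sub_zero]
        simpa [Complex.norm_real, abs_of_pos ht] using htδ
      · simp only [if_neg hkj, hu]
        by_cases hk0 : z₀ k = 0
        · rw [if_pos hk0, Complex.dist_eq, hk0, sub_zero]
          simpa [Complex.norm_real, abs_of_pos hδ] using le_refl δ
        · rw [if_neg hk0, dist_self]
          exact hδ.le
    have hwG : w ∈ G := hballG hwball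
    have hMw : ∀ θ ∈ Box n, ‖f (Rot θ w)‖ ≤ M := by
      intro θ hθ
      refine hM _ ⟨⟨θ, w⟩, ⟨?_, hwball⟩, rfl⟩
      intro k _
      exact ⟨(hθ k (Set.mem_univ k)).1.le, (hθ k (Set.mem_univ k)).2⟩
    have := coeff_bound hG hcirc hfc ha hp ν hwG hM0 hMw
    have hprod : ‖a ν * ∏ k, w k ^ ν k‖ = ‖a ν‖ * (t ^ ν j * C) := by
      rw [norm_mul, norm_prod]
      congr 1
      rw [← Finset.mul_prod_erase Finset.univ _ (Finset.mem_univ j)]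
      congr 1
      · show ‖(if j = j then (t : ℂ) else u j) ^ ν j‖ = t ^ ν j
        rw [if_pos rfl, norm_zpow, Complex.norm_real, Real.norm_eq_abs, abs_of_pos ht]
      · rw [hC]
        refine Finset.prod_congr rfl fun k hk => ?_
        show ‖(if k = j then (t : ℂ) else u k) ^ ν k‖ = ‖u k‖ ^ ν k
        rw [if_neg (Finset.mem_erase.mp hk).1, norm_zpow]
    rwa [hprod] at this
  -- conclude a ν = 0
  by_contra hav
  have hB : 0 < ‖a ν‖ * C := mul_pos (norm_pos_iff.mpr hav) hC0
  set B := ‖a ν‖ * C with hBdef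
  set t : ℝ := min δ (min 1 (B / (M + 1))) with ht
  have ht0 : 0 < t := by
    refine lt_min hδ (lt_min one_pos ?_)
    positivity
  have htδ : t ≤ δ := min_le_left _ _
  have ht1 : t ≤ 1 := le_trans (min_le_right _ _) (min_le_left _ _)
  have htB : t ≤ B / (M + 1) := le_trans (min_le_right _ _) (min_le_right _ _)
  have hzpow : t⁻¹ ≤ t ^ ν j := by
    have : t ^ (-1 : ℤ) ≤ t ^ ν j := by
      refine zpow_le_zpow_right_of_le_one₀ ht0 ht1 ?_
      omega
    simpa using this
  have hM1 : M + 1 ≤ B / t := (le_div_iff₀ ht0).mpr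
    (by rw [mul_comm]; exact (le_div_iff₀ (by positivity : (0:ℝ) < M + 1)).mp htB)
  have hchain : M + 1 ≤ M := by
    calc M + 1 ≤ B / t := hM1
      _ = B * t⁻¹ := div_eq_mul_inv B t
      _ ≤ B * t ^ ν j := by
          exact mul_le_mul_of_nonneg_left hzpow hB.le
      _ = ‖a ν‖ * (t ^ ν j * C) := by rw [hBdef]; ring
      _ ≤ M := hbound t ht0 htδ
  linarith

end Stmt9Aux

/-- `L^p`-bounds for the Laurent terms of an `L^p` holomorphic function. -/
theorem stmt9 {n : ℕ} (G : Set (Fin n → ℂ)) (hdom : IsDomainSet G) (hcirc : IsCircled G)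
    (p : ℝ) (hp : 1 ≤ p) (f : (Fin n → ℂ) → ℂ) (hf : DifferentiableOn ℂ f G)
    (hfp : MemLp f (ENNReal.ofReal p) (volume.restrict G))
    (a : (Fin n → ℤ) → ℂ) (ha : HasLaurent G f a) :
    (∀ ν : Fin n → ℤ,
      ∫⁻ z in G, (‖a ν * ∏ j, z j ^ ν j‖₊ : ℝ≥0∞) ^ p ≤
        ∫⁻ z in G, (‖f z‖₊ : ℝ≥0∞) ^ p) ∧
    ((∃ z ∈ G, f z ≠ 0) → ∃ ν₀ : Fin n → ℤ,
      (∀ j, ν₀ j < 0 → ∀ z ∈ G, z j ≠ 0) ∧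
      MemLp (fun z : Fin n → ℂ => ∏ j, z j ^ ν₀ j) (ENNReal.ofReal p)
        (volume.restrict G)) := by
  classical
  obtain ⟨hGopen, -⟩ := hdom
  have hfc : ContinuousOn f G := hf.continuousOn
  have hcirc' : ∀ z ∈ G, ∀ θ : Fin n → ℝ,
      (fun j => Complex.exp ((θ j : ℂ) * Complex.I) * z j) ∈ G := hcirc
  have hpart1 : ∀ ν : Fin n → ℤ,
      ∫⁻ z in G, (‖a ν * ∏ j, z j ^ ν j‖₊ : ℝ≥0∞) ^ p ≤
        ∫⁻ z in G, (‖f z‖₊ : ℝ≥0∞) ^ p :=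
    fun ν => Stmt9Aux.part1 hGopen hcirc' hfc ha hp ν
  refine ⟨hpart1, ?_⟩
  rintro ⟨z₁, hz₁, hfz₁⟩
  have hex : ∃ ν₀, a ν₀ ≠ 0 := by
    by_contra h
    push_neg at h
    have hs := ha z₁ hz₁
    simp only [h, zero_mul] at hs
    exact hfz₁ (hs.unique hasSum_zero)
  obtain ⟨ν₀, hν₀⟩ := hex
  have hppos : (0:ℝ) < p := lt_of_lt_of_le one_pos hp
  refine ⟨ν₀, fun j hj z hz hzj =>
    hν₀ (Stmt9Aux.coeff_vanish hGopen hcirc' hfc ha hp ν₀ j hj hz hzj), ?_⟩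
  have hmeas : Measurable fun z : Fin n → ℂ => ∏ j, z j ^ ν₀ j :=
    Finset.measurable_prod _ fun j _ => (measurable_pi_apply j).pow_const (ν₀ j)
  refine ⟨hmeas.aestronglyMeasurable, ?_⟩
  have hq0 : ENNReal.ofReal p ≠ 0 := by
    simp only [ne_eq, ENNReal.ofReal_eq_zero, not_le]
    linarith
  have hqt : ENNReal.ofReal p ≠ ⊤ := ENNReal.ofReal_ne_top
  have htoReal : (ENNReal.ofReal p).toReal = p := ENNReal.toReal_ofReal (by linarith)
  have hffin : ∫⁻ z in G, (‖f z‖₊ : ℝ≥0∞) ^ p < ⊤ := by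
    have h2 := hfp.2
    rw [eLpNorm_eq_lintegral_rpow_enorm_toReal hq0 hqt, htoReal] at h2
    exact (ENNReal.rpow_lt_top_iff_of_pos (by positivity : (0:ℝ) < 1/p)).mp h2
  have hfin2 : ∫⁻ z in G, (‖a ν₀ * ∏ j, z j ^ ν₀ j‖₊ : ℝ≥0∞) ^ p < ⊤ :=
    lt_of_le_of_lt (hpart1 ν₀) hffin
  set c : ℝ≥0∞ := (‖a ν₀‖₊ : ℝ≥0∞) ^ p with hc
  have hc0 : c ≠ 0 := by
    rw [hc]
    simp [ENNReal.rpow_eq_zero_iff, hν₀, hppos, hppos.not_gt]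
  have hct : c ≠ ⊤ := by
    rw [hc]
    exact ENNReal.rpow_ne_top_of_nonneg hppos.le ENNReal.coe_ne_top
  have hfin3 : ∫⁻ z in G, (‖∏ j, z j ^ ν₀ j‖₊ : ℝ≥0∞) ^ p < ⊤ := by
    have e : ∫⁻ z in G, (‖a ν₀ * ∏ j, z j ^ ν₀ j‖₊ : ℝ≥0∞) ^ p
        = c * ∫⁻ z in G, (‖∏ j, z j ^ ν₀ j‖₊ : ℝ≥0∞) ^ p := by
      rw [← MeasureTheory.lintegral_const_mul' _ _ hct]
      refine lintegral_congr fun z => ?_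
      rw [nnnorm_mul, ENNReal.coe_mul, ENNReal.mul_rpow_of_nonneg _ _ hppos.le, hc]
    rw [e] at hfin2
    by_contra hX
    rw [not_lt, top_le_iff] at hX
    rw [hX, ENNReal.mul_top hc0] at hfin2
    exact lt_irrefl _ hfin2
  rw [eLpNorm_eq_lintegral_rpow_enorm_toReal hq0 hqt, htoReal]
  exact ENNReal.rpow_lt_top_of_nonneg (by positivity) hfin3.ne
end
end

section
/- Let α_1,…,α_n ∈ ℤ^n be ℝ-linearly independent, U := {z ∈ ℂ^n : z_ℓ ≠ 0 whenever α_{j,ℓ} < 0 for some j}, and D := {z ∈ U : |z^{α_j}| < 1, j = 1,…,n}. If ν ∈ ℤ^n lies in the convex cone ℝ_+α_1 + ⋯ + ℝ_+α_n, then |z^ν| ≤ 1 for all z ∈ D. If moreover ν − e_ℓ ∈ ℝ_+α_1 + ⋯ + ℝ_+α_n for some ℓ (e_ℓ the ℓ-th standard basis vector of ℝ^n), then |z^ν| ≤ |z_ℓ| on D, and consequently z^ν(z) → 0 as D ∋ z → z_0 for every z_0 ∈ ∂D with z_{0,ℓ} = 0. -/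
open MeasureTheory Filter Topology Set
open scoped ENNReal

noncomputable section

lemma rpow_sum_eq' {n : ℕ} (x : ℝ) (hx : 0 ≤ x) (c : Fin n → ℝ)
    (hc : x = 0 → ∀ j, 0 ≤ c j) :
    x ^ (∑ j, c j) = ∏ j, x ^ c j := by
  rcases hx.lt_or_eq with h | h
  · simp [Real.rpow_def_of_pos h, Finset.mul_sum, Real.exp_sum]
  · rw [← h]
    by_cases hall : ∀ j, c j = 0
    · simp [hall]
    · push_neg at hall
      obtain ⟨j, hj⟩ := hall
      have hcj : 0 < c j := lt_of_le_of_ne (hc h.symm j) (Ne.symm hj)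
      have hsum : 0 < ∑ j, c j :=
        Finset.sum_pos' (fun i _ => hc h.symm i) ⟨j, Finset.mem_univ j, hcj⟩
      rw [Real.zero_rpow hsum.ne', Finset.prod_eq_zero (Finset.mem_univ j)
        (Real.zero_rpow hcj.ne')]

lemma key_le_one {n : ℕ} (x : Fin n → ℝ) (hx : ∀ ℓ, 0 ≤ x ℓ)
    (a : Fin n → Fin n → ℝ) (hza : ∀ ℓ, x ℓ = 0 → ∀ j, 0 ≤ a j ℓ)
    (t : Fin n → ℝ) (ht : ∀ j, 0 ≤ t j)
    (hP : ∀ j, (∏ ℓ, x ℓ ^ (a j ℓ)) ≤ 1)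
    (c : Fin n → ℝ) (hc : ∀ ℓ, c ℓ = ∑ j, t j * a j ℓ) :
    (∏ ℓ, x ℓ ^ (c ℓ)) ≤ 1 := by
  have h1 : (∏ ℓ, x ℓ ^ (c ℓ)) = ∏ j, (∏ ℓ, x ℓ ^ (a j ℓ)) ^ (t j) := by
    calc (∏ ℓ, x ℓ ^ (c ℓ)) = ∏ ℓ, ∏ j, x ℓ ^ (t j * a j ℓ) := by
          refine Finset.prod_congr rfl fun ℓ _ => ?_
          rw [hc ℓ]
          exact rpow_sum_eq' (x ℓ) (hx ℓ) _
            (fun h0 j => mul_nonneg (ht j) (hza ℓ h0 j))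
      _ = ∏ j, ∏ ℓ, (x ℓ ^ (a j ℓ)) ^ (t j) := by
          rw [Finset.prod_comm]
          refine Finset.prod_congr rfl fun j _ => Finset.prod_congr rfl fun ℓ _ => ?_
          rw [mul_comm, Real.rpow_mul (hx ℓ)]
      _ = ∏ j, (∏ ℓ, x ℓ ^ (a j ℓ)) ^ (t j) := by
          refine Finset.prod_congr rfl fun j _ => ?_
          rw [← Real.finset_prod_rpow _ _ (fun ℓ _ => Real.rpow_nonneg (hx ℓ) _)]
  rw [h1]
  refine Finset.prod_le_one (fun j _ => Real.rpow_nonneg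
    (Finset.prod_nonneg fun ℓ _ => Real.rpow_nonneg (hx ℓ) _) _) fun j _ => ?_
  exact Real.rpow_le_one (Finset.prod_nonneg fun ℓ _ => Real.rpow_nonneg (hx ℓ) _) (hP j) (ht j)

lemma key_zpow {n : ℕ} (z : Fin n → ℂ) (α : Fin n → Fin n → ℤ)
    (hz1 : ∀ ℓ, (∃ j, α j ℓ < 0) → z ℓ ≠ 0)
    (hz2 : ∀ j, (∏ ℓ, ‖z ℓ‖ ^ (α j ℓ)) < 1)
    (t : Fin n → ℝ) (ht : ∀ j, 0 ≤ t j)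
    (μ : Fin n → ℤ) (hμ : ∀ ℓ, (μ ℓ : ℝ) = ∑ j, t j * (α j ℓ : ℝ)) :
    (∏ ℓ, ‖z ℓ‖ ^ (μ ℓ)) ≤ 1 := by
  have conv : ∀ (w : ℝ) (m : ℤ), w ^ ((m : ℝ)) = w ^ m := fun w m => Real.rpow_intCast w m
  have := key_le_one (fun ℓ => ‖z ℓ‖) (fun ℓ => norm_nonneg _)
    (fun j ℓ => (α j ℓ : ℝ))
    (fun ℓ h0 j => by
      have hzℓ : z ℓ = 0 := norm_eq_zero.mp h0
      by_contra hneg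
      push_neg at hneg
      exact hz1 ℓ ⟨j, by exact_mod_cast hneg⟩ hzℓ)
    t ht
    (fun j => by
      calc (∏ ℓ, ‖z ℓ‖ ^ ((α j ℓ : ℝ))) = ∏ ℓ, ‖z ℓ‖ ^ (α j ℓ) :=
            Finset.prod_congr rfl fun ℓ _ => conv _ _
        _ ≤ 1 := (hz2 j).le)
    (fun ℓ => (μ ℓ : ℝ)) hμ
  calc (∏ ℓ, ‖z ℓ‖ ^ (μ ℓ)) = ∏ ℓ, ‖z ℓ‖ ^ ((μ ℓ : ℝ)) :=
        Finset.prod_congr rfl fun ℓ _ => (conv _ _).symm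
    _ ≤ 1 := this

/-- Monomials with exponent in the cone `ℝ₊α₁ + ⋯ + ℝ₊αₙ` are bounded by `1` on `D`,
and by `|z_ℓ|` if moreover `ν - e_ℓ` lies in the cone. -/
theorem stmt12 {n : ℕ} (α : Fin n → Fin n → ℤ)
    (hind : LinearIndependent ℝ (fun j : Fin n => fun ℓ : Fin n => (α j ℓ : ℝ)))
    (ν : Fin n → ℤ) (D : Set (Fin n → ℂ))
    (hD : D = {z : Fin n → ℂ | (∀ ℓ, (∃ j, α j ℓ < 0) → z ℓ ≠ 0) ∧
        ∀ j, (∏ ℓ, ‖z ℓ‖ ^ (α j ℓ)) < 1}) :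
    ((∃ t : Fin n → ℝ, (∀ j, 0 ≤ t j) ∧
        ∀ ℓ, (ν ℓ : ℝ) = ∑ j, t j * (α j ℓ : ℝ)) →
      ∀ z ∈ D, (∏ j, ‖z j‖ ^ (ν j)) ≤ 1) ∧
    (∀ ℓ₀ : Fin n,
      (∃ t : Fin n → ℝ, (∀ j, 0 ≤ t j) ∧
        ∀ ℓ, (ν ℓ : ℝ) - (if ℓ = ℓ₀ then 1 else 0) = ∑ j, t j * (α j ℓ : ℝ)) →
      (∀ z ∈ D, (∏ j, ‖z j‖ ^ (ν j)) ≤ ‖z ℓ₀‖) ∧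
      (∀ z₀ ∈ frontier D, z₀ ℓ₀ = 0 →
        Tendsto (fun z : Fin n → ℂ => ∏ j, z j ^ (ν j)) (nhdsWithin z₀ D) (nhds 0))) := by
  constructor
  · rintro ⟨t, ht, hν⟩ z hz
    rw [hD] at hz
    exact key_zpow z α hz.1 hz.2 t ht ν hν
  · rintro ℓ₀ ⟨t, ht, hν⟩
    set μ : Fin n → ℤ := fun ℓ => ν ℓ - (if ℓ = ℓ₀ then 1 else 0) with hμdef
    have hμ : ∀ ℓ, (μ ℓ : ℝ) = ∑ j, t j * (α j ℓ : ℝ) := by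
      intro ℓ
      have := hν ℓ
      simp only [hμdef]
      push_cast
      split <;> simp_all
    have hbound : ∀ z ∈ D, (∏ j, ‖z j‖ ^ (ν j)) ≤ ‖z ℓ₀‖ := by
      intro z hz
      rw [hD] at hz
      obtain ⟨hz1, hz2⟩ := hz
      have hle : (∏ j, ‖z j‖ ^ (μ j)) ≤ 1 := key_zpow z α hz1 hz2 t ht μ hμ
      have hsplit : (∏ j, ‖z j‖ ^ (ν j)) = (∏ j, ‖z j‖ ^ (μ j)) * ‖z ℓ₀‖ := by
        have : (∏ j, ‖z j‖ ^ (ν j))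
            = ∏ j, (‖z j‖ ^ (μ j) * (if j = ℓ₀ then ‖z ℓ₀‖ else 1)) := by
          refine Finset.prod_congr rfl fun j _ => ?_
          by_cases hj : j = ℓ₀
          · subst hj
            simp only [eq_self_iff_true, if_true]
            have hμj : μ j = ν j - 1 := by simp [hμdef]
            rw [hμj]
            by_cases h0 : z j = 0
            · have hα : ∀ i, 0 ≤ α i j := by
                intro i
                by_contra hneg
                push_neg at hneg
                exact hz1 j ⟨i, hneg⟩ h0
              have h1 : ((ν j : ℝ)) - 1 = ∑ i, t i * (α i j : ℝ) := by
                simpa using hν j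
              have h2 : (0:ℝ) ≤ ∑ i, t i * (α i j : ℝ) :=
                Finset.sum_nonneg fun i _ => mul_nonneg (ht i) (by exact_mod_cast hα i)
              have hν1 : (1:ℝ) ≤ ((ν j : ℝ)) := by linarith
              have hν1' : (1:ℤ) ≤ ν j := by exact_mod_cast hν1
              have hnz : ‖z j‖ = 0 := by simp [h0]
              rw [hnz, zero_zpow _ (by omega), mul_zero]
            · have hne : ‖z j‖ ≠ 0 := by simpa using h0
              rw [← zpow_add_one₀ hne (ν j - 1)]
              norm_num
          · simp [hμdef, hj]
        rw [this, Finset.prod_mul_distrib, Finset.prod_ite_eq' Finset.univ ℓ₀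
          (fun _ => ‖z ℓ₀‖)]
        simp
      rw [hsplit]
      exact mul_le_of_le_one_left (norm_nonneg _) hle
    refine ⟨hbound, ?_⟩
    intro z₀ _ h0
    refine squeeze_zero_norm' (a := fun z => ‖z ℓ₀‖) ?_ ?_
    · filter_upwards [self_mem_nhdsWithin] with z hz
      calc ‖∏ j, z j ^ (ν j)‖ = ∏ j, ‖z j‖ ^ (ν j) := by
            rw [norm_prod]; exact Finset.prod_congr rfl fun j _ => norm_zpow _ _
        _ ≤ ‖z ℓ₀‖ := hbound z hz
    · have : Tendsto (fun z : Fin n → ℂ => ‖z ℓ₀‖) (𝓝 z₀) (𝓝 ‖z₀ ℓ₀‖) :=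
        ((continuous_apply ℓ₀).norm).tendsto z₀
      rw [h0, norm_zero] at this
      exact this.mono_left nhdsWithin_le_nhds
end
end

section
/- Let G ⊆ ℂ^n be a domain and let G_0, G̃ ⊆ ℂ^n be domains with ∅ ≠ G_0 ⊆ G ∩ G̃. Suppose that every g ∈ H^∞(G) ∩ O(cl G) admits a holomorphic g̃ on G̃ with g̃ = g on G_0. Then for every f ∈ H^∞(G) ∩ O(cl G) and every holomorphic f̃ on G̃ with f̃ = f on G_0, one has sup_{G̃} |f̃| ≤ sup_G |f|. -/
open MeasureTheory Filter Topology Set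
open scoped ENNReal

noncomputable section

/-- Identity theorem in several variables, via restriction to complex lines. -/
lemma eqOn_one_of_eqOn_one {n : ℕ} {Gt : Set (Fin n → ℂ)} (hGto : IsOpen Gt)
    (hGtc : IsPreconnected Gt) {h : (Fin n → ℂ) → ℂ} (hd : DifferentiableOn ℂ h Gt)
    {G₀ : Set (Fin n → ℂ)} (h0o : IsOpen G₀) (h0ne : G₀.Nonempty) (h0sub : G₀ ⊆ Gt)
    (heq : Set.EqOn h 1 G₀) : Set.EqOn h 1 Gt := by
  set S : Set (Fin n → ℂ) := {z | ∀ᶠ w in 𝓝 z, h w = 1} with hS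
  have hSopen : IsOpen S := by
    refine isOpen_iff_mem_nhds.2 fun z hz => ?_
    exact eventually_eventually_nhds.2 hz
  have key : Gt ⊆ S := by
    refine hGtc.subset_of_closure_inter_subset hSopen ?_ ?_
    · obtain ⟨x, hx⟩ := h0ne
      exact ⟨x, h0sub hx, (h0o.eventually_mem hx).mono fun y hy => heq hy⟩
    · rintro z ⟨hzS, hzGt⟩
      obtain ⟨r, hr, hball⟩ := Metric.isOpen_iff.1 hGto z hzGt
      obtain ⟨a, haS, hadist⟩ := Metric.mem_closure_iff.1 hzS (r / 2) (by linarith)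
      have hball2 : Metric.ball a (r / 2) ⊆ Gt := by
        intro y hy
        apply hball
        rw [Metric.mem_ball] at *
        calc dist y z ≤ dist y a + dist a z := dist_triangle _ _ _
          _ < r / 2 + r / 2 := by rw [dist_comm a z]; exact add_lt_add hy hadist
          _ = r := by ring
      have hone : ∀ w ∈ Metric.ball a (r / 2), h w = 1 := by
        intro w hw
        rcases eq_or_ne w a with rfl | hwa
        · exact haS.self_of_nhds
        · set L : ℂ → (Fin n → ℂ) := fun t => a + t • (w - a) with hL
          have hLd : Differentiable ℂ L :=
            (differentiable_id.smul_const (w - a)).const_add a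
          set ρ : ℝ := (r / 2) / ‖w - a‖ with hρ
          have hwa' : 0 < ‖w - a‖ := norm_sub_pos_iff.2 hwa
          have hρ1 : 1 < ρ := by
            rw [hρ, lt_div_iff₀ hwa']
            rw [Metric.mem_ball, dist_eq_norm] at hw
            simpa using hw
          have hDsub : ∀ t ∈ Metric.ball (0 : ℂ) ρ, L t ∈ Metric.ball a (r / 2) := by
            intro t ht
            rw [Metric.mem_ball, dist_eq_norm] at ht ⊢
            have : ‖L t - a‖ = ‖t‖ * ‖w - a‖ := by
              simp [hL, norm_smul]
            rw [this]
            simp only [sub_zero] at ht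
            calc ‖t‖ * ‖w - a‖ < ρ * ‖w - a‖ := by
                  exact mul_lt_mul_of_pos_right ht hwa'
              _ = r / 2 := by rw [hρ]; field_simp
          have hgd : DifferentiableOn ℂ (h ∘ L) (Metric.ball (0 : ℂ) ρ) := by
            intro t ht
            have hmem := hball2 (hDsub t ht)
            exact (((hd (L t) hmem).differentiableAt
              (hGto.mem_nhds hmem)).comp t (hLd t)).differentiableWithinAt
          have hganal : AnalyticOnNhd ℂ (h ∘ L) (Metric.ball (0 : ℂ) ρ) :=
            hgd.analyticOnNhd Metric.isOpen_ball
          have hev : (h ∘ L) =ᶠ[𝓝 (0 : ℂ)] (fun _ => (1 : ℂ)) := by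
            have hL0 : L 0 = a := by simp [hL]
            have hcont : ContinuousAt L 0 := hLd.continuous.continuousAt
            have := hcont.preimage_mem_nhds (hL0 ▸ haS)
            filter_upwards [this] with t ht using ht
          have h0mem : (0 : ℂ) ∈ Metric.ball (0 : ℂ) ρ := by
            simp [Metric.mem_ball]; linarith
          have h1mem : (1 : ℂ) ∈ Metric.ball (0 : ℂ) ρ := by
            simp [Metric.mem_ball]; exact hρ1
          have := hganal.eqOn_of_preconnected_of_eventuallyEq
            (analyticOnNhd_const : AnalyticOnNhd ℂ (fun _ => (1 : ℂ)) _)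
            (convex_ball (0 : ℂ) ρ).isPreconnected h0mem hev h1mem
          simpa [hL] using this
      have hzmem : z ∈ Metric.ball a (r / 2) := by
        rw [Metric.mem_ball]; exact hadist
      exact (Metric.isOpen_ball.eventually_mem hzmem).mono fun y hy => hone y hy
  intro z hz
  exact (key hz).self_of_nhds

/-- Extensions of functions in `H^∞(G) ∩ O(cl G)` obey the maximum norm bound. -/
theorem stmt14 {n : ℕ} (G G₀ Gt : Set (Fin n → ℂ)) (hG : IsDomainSet G)
    (hG0 : IsDomainSet G₀) (hGt : IsDomainSet Gt) (hne : G₀.Nonempty)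
    (hsub : G₀ ⊆ G ∩ Gt)
    (hext : ∀ g ∈ Hinf G ∩ Ocl G,
      ∃ gt : (Fin n → ℂ) → ℂ, DifferentiableOn ℂ gt Gt ∧ Set.EqOn gt g G₀) :
    ∀ f ∈ Hinf G ∩ Ocl G, ∀ ft : (Fin n → ℂ) → ℂ,
      DifferentiableOn ℂ ft Gt → Set.EqOn ft f G₀ →
      ∀ C : ℝ, (∀ z ∈ G, ‖f z‖ ≤ C) → ∀ w ∈ Gt, ‖ft w‖ ≤ C := by
  rintro f ⟨⟨hfd, -⟩, U, hUo, hclU, F, hFd, hfF⟩ ft hftd hfteq C hC w hw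
  by_contra hcon
  push_neg at hcon
  set lam : ℂ := ft w with hlam
  have hClam : C < ‖lam‖ := hcon
  -- bound for F on the closure of G
  have hCF : ∀ z ∈ closure G, ‖F z‖ ≤ C := by
    intro z hz
    haveI : (𝓝[G] z).NeBot := mem_closure_iff_nhdsWithin_neBot.1 hz
    have hcontF : ContinuousAt F z :=
      ((hFd z (hclU hz)).differentiableAt (hUo.mem_nhds (hclU hz))).continuousAt
    have htend : Tendsto (fun x => ‖F x‖) (𝓝[G] z) (𝓝 ‖F z‖) :=
      (hcontF.continuousWithinAt (s := G)).norm
    refine le_of_tendsto htend ?_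
    filter_upwards [self_mem_nhdsWithin] with x hx
    rw [← hfF hx]
    exact hC x hx
  -- f never takes the value lam on G
  have hfne : ∀ z ∈ G, f z - lam ≠ 0 := by
    intro z hz h0
    have heq : f z = lam := by linear_combination h0
    have hlt := hC z hz
    rw [heq] at hlt
    exact absurd hlt (not_le.2 hClam)
  -- the auxiliary function g = 1/(f - lam) belongs to H∞(G) ∩ O(cl G)
  set g : (Fin n → ℂ) → ℂ := fun z => (f z - lam)⁻¹ with hg
  have hgH : g ∈ Hinf G := by
    constructor
    · exact DifferentiableOn.inv (hfd.sub (differentiableOn_const lam)) hfne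
    · refine ⟨(‖lam‖ - C)⁻¹, fun z hz => ?_⟩
      have h1 : ‖lam‖ - C ≤ ‖f z - lam‖ := by
        have := norm_sub_norm_le lam (f z)
        have h2 := hC z hz
        have : ‖lam‖ - ‖f z‖ ≤ ‖lam - f z‖ := norm_sub_norm_le lam (f z)
        rw [norm_sub_rev] at this
        linarith
      rw [hg, norm_inv]
      exact inv_anti₀ (by linarith) h1
  have hgO : g ∈ Ocl G := by
    set V : Set (Fin n → ℂ) := U ∩ {z | ‖F z‖ < ‖lam‖} with hV
    have hVo : IsOpen V := by
      have : V = U ∩ (fun z => F z) ⁻¹' {c : ℂ | ‖c‖ < ‖lam‖} := rfl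
      rw [this]
      exact hFd.continuousOn.isOpen_inter_preimage hUo
        (isOpen_lt continuous_norm continuous_const)
    have hclV : closure G ⊆ V := fun z hz => ⟨hclU hz, lt_of_le_of_lt (hCF z hz) hClam⟩
    refine ⟨V, hVo, hclV, fun z => (F z - lam)⁻¹, ?_, ?_⟩
    · refine DifferentiableOn.inv ((hFd.mono inter_subset_left).sub
        (differentiableOn_const lam)) ?_
      intro z hz h0
      have hFz : F z = lam := by linear_combination h0
      have hlt : ‖F z‖ < ‖lam‖ := hz.2
      rw [hFz] at hlt
      exact lt_irrefl _ hlt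
    · intro z hz
      have hzz : f z = F z := hfF hz
      simp only [hg, hzz]
  obtain ⟨gt, hgtd, hgteq⟩ := hext g ⟨hgH, hgO⟩
  -- the product gt * (ft - lam) equals 1 on G₀, hence on Gt
  set h : (Fin n → ℂ) → ℂ := fun z => gt z * (ft z - lam) with hh
  have hhd : DifferentiableOn ℂ h Gt :=
    hgtd.mul (hftd.sub (differentiableOn_const lam))
  have hh1 : Set.EqOn h 1 G₀ := by
    intro x hx
    have hxG : x ∈ G := (hsub hx).1
    have : h x = (f x - lam)⁻¹ * (f x - lam) := by
      rw [hh]; simp only [hgteq hx, hfteq hx, hg]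
    rw [this, inv_mul_cancel₀ (hfne x hxG)]
    rfl
  have := eqOn_one_of_eqOn_one hGt.1 hGt.2.isPreconnected hhd hG0.1 hne
    (fun x hx => (hsub hx).2) hh1 hw
  rw [hh] at this
  simp only [← hlam, sub_self, mul_zero] at this
  exact zero_ne_one (this.trans rfl)
end
end

section
/- Let G ⊆ ℂ^n be an n-circled domain of holomorphy and set F := E(log G). Then for every f ∈ H^∞(G), the Laurent series of f has the form Σ_{ν ∈ F^⊥ ∩ ℤ^n} a_ν(f) z^ν; that is, a_ν(f) = 0 for every ν ∈ ℤ^n not orthogonal to F. -/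
open MeasureTheory Filter Topology Set
open scoped ENNReal

noncomputable section

lemma rootsum (N : ℕ) (hN : 0 < N) (m : ℤ) :
    ∑ k ∈ Finset.range N, Complex.exp (2 * Real.pi * Complex.I * m * k / N)
      = if (N:ℤ) ∣ m then (N:ℂ) else 0 := by
  have hNC : (N : ℂ) ≠ 0 := Nat.cast_ne_zero.mpr hN.ne'
  set x : ℂ := Complex.exp (2 * Real.pi * Complex.I * m / N) with hx
  have hterm : ∀ k ∈ Finset.range N,
      Complex.exp (2 * Real.pi * Complex.I * m * k / N) = x ^ k := by
    intro k _
    rw [hx, ← Complex.exp_nat_mul]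
    ring_nf
  rw [Finset.sum_congr rfl hterm]
  have hxN : x ^ N = 1 := by
    rw [hx, ← Complex.exp_nat_mul]
    have : (N:ℂ) * (2 * Real.pi * Complex.I * m / N) = m * (2 * Real.pi * Complex.I) := by
      field_simp
    rw [this, Complex.exp_int_mul_two_pi_mul_I]
  by_cases hdvd : (N:ℤ) ∣ m
  · rw [if_pos hdvd]
    obtain ⟨c, hc⟩ := hdvd
    have hx1 : x = 1 := by
      rw [hx, hc]
      have : 2 * (Real.pi:ℂ) * Complex.I * ((N:ℤ)*c : ℤ) / N
          = (c:ℂ) * (2 * Real.pi * Complex.I) := by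
        push_cast
        field_simp
      rw [this, Complex.exp_int_mul_two_pi_mul_I]
    simp [hx1]
  · rw [if_neg hdvd]
    have hx1 : x ≠ 1 := by
      intro h
      rw [hx, Complex.exp_eq_one_iff] at h
      obtain ⟨k, hk⟩ := h
      apply hdvd
      refine ⟨k, ?_⟩
      have h2 : (2:ℂ) * Real.pi * Complex.I ≠ 0 := by
        simp [Real.pi_ne_zero, Complex.I_ne_zero]
      have hmc : (m:ℂ) = N * k := by
        field_simp at hk
        have h3 : (m:ℂ) * (2 * Real.pi * Complex.I)
            = (N:ℂ) * k * (2 * Real.pi * Complex.I) := by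
          rw [mul_comm ((N:ℂ)*(k:ℂ)) _]
          rw [hk]; ring
        exact mul_right_cancel₀ h2 h3
      exact_mod_cast hmc
    rw [geom_sum_eq hx1, hxN]
    simp

lemma kernelsum {n : ℕ} (N : ℕ) (hN : 0 < N) (d : Fin n → ℤ) :
    ∑ k ∈ Fintype.piFinset (fun _ : Fin n => Finset.range N),
        ∏ j, Complex.exp (2 * Real.pi * Complex.I * d j * k j / N)
      = if ∀ j, (N:ℤ) ∣ d j then ((N:ℂ))^n else 0 := by
  rw [← Finset.prod_univ_sum (fun _ : Fin n => Finset.range N)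
      (fun j (k : ℕ) => Complex.exp (2 * Real.pi * Complex.I * d j * k / N))]
  have h : ∀ j : Fin n,
      ∑ k ∈ Finset.range N, Complex.exp (2 * Real.pi * Complex.I * d j * k / N)
      = if (N:ℤ) ∣ d j then (N:ℂ) else 0 := fun j => rootsum N hN (d j)
  rw [Finset.prod_congr rfl (fun j _ => h j)]
  by_cases hd : ∀ j, (N:ℤ) ∣ d j
  · rw [if_pos hd]
    simp [hd]
  · rw [if_neg hd]
    push_neg at hd
    obtain ⟨j, hj⟩ := hd
    exact Finset.prod_eq_zero (Finset.mem_univ j) (by rw [if_neg hj])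

lemma coeffBound {n : ℕ} {G : Set (Fin n → ℂ)} (hcirc : IsCircled G)
    {f : (Fin n → ℂ) → ℂ} {a : (Fin n → ℤ) → ℂ} (ha : HasLaurent G f a)
    {C : ℝ} (hC : ∀ z ∈ G, ‖f z‖ ≤ C) (ν : Fin n → ℤ)
    {x : Fin n → ℝ} (hx : x ∈ logSet G) :
    ‖a ν‖ * Real.exp (∑ j, (ν j : ℝ) * x j) ≤ C := by
  classical
  set z : Fin n → ℂ := fun j => (Real.exp (x j) : ℂ) with hzdef
  have hz : z ∈ G := hx
  set T : (Fin n → ℤ) → ℂ := fun μ => a μ * ∏ j, z j ^ μ j with hTdef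
  have hT : HasSum T (f z) := ha z hz
  have hTn : Summable (fun μ => ‖T μ‖) := summable_norm_iff.mpr hT.summable
  have hTν : ‖T ν‖ = ‖a ν‖ * Real.exp (∑ j, (ν j : ℝ) * x j) := by
    rw [hTdef]
    simp only [norm_mul]
    congr 1
    rw [norm_prod]
    have h1 : ∀ j, ‖z j ^ ν j‖ = Real.exp ((ν j : ℝ) * x j) := by
      intro j
      rw [norm_zpow, hzdef]
      simp only [Complex.norm_real, Real.norm_eq_abs, abs_of_pos (Real.exp_pos _)]
      rw [← Real.rpow_intCast, ← Real.exp_mul]; ring_nf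
    rw [Finset.prod_congr rfl (fun j _ => h1 j), ← Real.exp_sum]
  rw [← hTν]
  refine le_of_forall_pos_le_add ?_
  intro ε hε
  obtain ⟨s, hs⟩ : ∃ s : Finset (Fin n → ℤ),
      (∑' μ : ↑((s : Set (Fin n → ℤ))ᶜ), ‖T μ‖) < ε := by
    have h1 : Tendsto (fun s : Finset (Fin n → ℤ) => ∑ μ ∈ s, ‖T μ‖) atTop
        (nhds (∑' μ, ‖T μ‖)) := hTn.hasSum
    have h2 : (∑' μ, ‖T μ‖) - ε < ∑' μ, ‖T μ‖ := by linarith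
    obtain ⟨s, hs2⟩ := (h1.eventually (eventually_gt_nhds h2)).exists
    refine ⟨s, ?_⟩
    have h3 := Summable.sum_add_tsum_compl (s := s) hTn
    linarith
  set M : ℕ := s.sup fun μ => Finset.univ.sup fun j => (μ j - ν j).natAbs with hM
  set N : ℕ := M + 1 with hNdef
  have hN : 0 < N := Nat.succ_pos M
  have hNex : ∀ μ ∈ s, μ ≠ ν → ¬ (∀ j, (N:ℤ) ∣ (μ j - ν j)) := by
    intro μ hμs hμν hdvd
    apply hμν
    funext j
    have h1a : (μ j - ν j).natAbs ≤ Finset.univ.sup fun j' => (μ j' - ν j').natAbs :=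
      Finset.le_sup (f := fun j' => (μ j' - ν j').natAbs) (Finset.mem_univ j)
    have h1b : (Finset.univ.sup fun j' => (μ j' - ν j').natAbs) ≤ M := by
      rw [hM]
      exact Finset.le_sup (f := fun μ' => Finset.univ.sup fun j' => (μ' j' - ν j').natAbs) hμs
    have h1 : (μ j - ν j).natAbs ≤ M := le_trans h1a h1b
    have h2 : |μ j - ν j| < (N : ℤ) := by
      rw [Int.abs_eq_natAbs]
      exact_mod_cast Nat.lt_succ_of_le h1
    have h3 := Int.eq_zero_of_abs_lt_dvd (hdvd j) h2
    exact sub_eq_zero.mp h3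
  set w : (Fin n → ℕ) → (Fin n → ℂ) :=
    fun k => fun j => Complex.exp (((2 * Real.pi * k j / N : ℝ) : ℂ) * Complex.I) * z j
    with hwdef
  have hwG : ∀ k, w k ∈ G := fun k => hcirc z hz (fun j => 2 * Real.pi * k j / N)
  set e : (Fin n → ℤ) → (Fin n → ℕ) → ℂ :=
    fun m k => ∏ j, Complex.exp (2 * Real.pi * Complex.I * m j * k j / N) with hedef
  have hphase : ∀ (μ : Fin n → ℤ) (k : Fin n → ℕ),
      a μ * ∏ j, (w k j) ^ (μ j) = T μ * e μ k := by
    intro μ k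
    rw [hTdef, hedef, hwdef]
    simp only
    rw [mul_assoc]
    congr 1
    rw [mul_comm (∏ j, z j ^ μ j) _, ← Finset.prod_mul_distrib]
    refine Finset.prod_congr rfl fun j _ => ?_
    rw [mul_zpow]
    congr 1
    rw [← Complex.exp_int_mul]
    congr 1
    push_cast
    ring
  have hwk : ∀ k : Fin n → ℕ, HasSum (fun μ => T μ * e μ k) (f (w k)) := by
    intro k
    have h := ha (w k) (hwG k)
    have heq : (fun μ : Fin n → ℤ => a μ * ∏ j, (w k j) ^ (μ j))
        = fun μ => T μ * e μ k := funext fun μ => hphase μ k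
    rwa [heq] at h
  set K := Fintype.piFinset (fun _ : Fin n => Finset.range N) with hK
  set c : (Fin n → ℕ) → ℂ := fun k => e (fun j => -ν j) k with hc
  have hmulphase : ∀ (μ : Fin n → ℤ) (k : Fin n → ℕ),
      e μ k * c k = e (fun j => μ j - ν j) k := by
    intro μ k
    rw [hc, hedef]
    simp only
    rw [← Finset.prod_mul_distrib]
    refine Finset.prod_congr rfl fun j _ => ?_
    rw [← Complex.exp_add]
    congr 1
    push_cast
    ring
  have hA : HasSum (fun μ => ∑ k ∈ K, T μ * e (fun j => μ j - ν j) k)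
      (∑ k ∈ K, f (w k) * c k) := by
    refine hasSum_sum fun k _ => ?_
    have h := (hwk k).mul_right (c k)
    have heq : (fun μ : Fin n → ℤ => T μ * e μ k * c k)
        = fun μ => T μ * e (fun j => μ j - ν j) k := by
      funext μ; rw [mul_assoc, hmulphase]
    rwa [heq] at h
  set A := ∑ k ∈ K, f (w k) * c k with hAdef
  set P : (Fin n → ℤ) → Prop := fun μ => ∀ j, (N:ℤ) ∣ (μ j - ν j) with hP
  have hA2 : HasSum (fun μ => T μ * (if P μ then ((N:ℂ))^n else 0)) A := by
    have heq : (fun μ : Fin n → ℤ => ∑ k ∈ K, T μ * e (fun j => μ j - ν j) k)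
        = fun μ => T μ * (if P μ then ((N:ℂ))^n else 0) := by
      funext μ
      rw [← Finset.mul_sum]
      congr 1
      exact kernelsum N hN (fun j => μ j - ν j)
    rwa [heq] at hA
  have hδ : HasSum (fun μ => if μ = ν then T ν * (N:ℂ)^n else 0) (T ν * (N:ℂ)^n) :=
    hasSum_ite_eq ν _
  have hdiff := hA2.sub hδ
  have hcnorm : ∀ (m : Fin n → ℤ) (k : Fin n → ℕ), ‖e m k‖ = 1 := by
    intro m k
    rw [hedef]
    simp only
    rw [norm_prod]
    refine Finset.prod_eq_one fun j _ => ?_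
    have harg : 2 * (Real.pi:ℂ) * Complex.I * m j * k j / N
        = ((2 * Real.pi * m j * k j / N : ℝ) : ℂ) * Complex.I := by push_cast; ring
    rw [harg, Complex.norm_exp_ofReal_mul_I]
  have hAnorm : ‖A‖ ≤ (N:ℝ)^n * C := by
    rw [hAdef]
    calc ‖∑ k ∈ K, f (w k) * c k‖ ≤ ∑ k ∈ K, ‖f (w k) * c k‖ := norm_sum_le _ _
    _ ≤ ∑ _k ∈ K, C := by
        refine Finset.sum_le_sum fun k _ => ?_
        rw [norm_mul, hc, hcnorm, mul_one]
        exact hC _ (hwG k)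
    _ = (N:ℝ)^n * C := by
        rw [Finset.sum_const, hK]
        simp [Fintype.card_piFinset, mul_comm]
  set g : (Fin n → ℤ) → ℝ := fun μ => ‖T μ‖ * (N:ℝ)^n with hg
  have hgsumm : Summable g := hTn.mul_right _
  have hptwise : ∀ μ : Fin n → ℤ,
      ‖T μ * (if P μ then ((N:ℂ))^n else 0) - (if μ = ν then T ν * (N:ℂ)^n else 0)‖
      ≤ ((s : Set (Fin n → ℤ))ᶜ).indicator g μ := by
    intro μ
    have hind0 : 0 ≤ ((s : Set (Fin n → ℤ))ᶜ).indicator g μ :=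
      Set.indicator_nonneg (fun μ' _ => mul_nonneg (norm_nonneg _) (by positivity)) μ
    by_cases hμν : μ = ν
    · subst hμν
      have hPν : P μ := fun j => by simp
      rw [if_pos hPν, if_pos rfl, sub_self, norm_zero]
      exact hind0
    · rw [if_neg hμν, sub_zero]
      by_cases hμs : μ ∈ s
      · rw [if_neg (show ¬ P μ from hNex μ hμs hμν), mul_zero, norm_zero]
        exact hind0
      · have hmem : μ ∈ (s : Set (Fin n → ℤ))ᶜ := hμs
        rw [Set.indicator_of_mem hmem, hg]
        by_cases hPμ : P μ
        · rw [if_pos hPμ, norm_mul, norm_pow, Complex.norm_natCast]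
        · rw [if_neg hPμ, mul_zero, norm_zero]
          positivity
  have hFnorm : Summable (fun μ : Fin n → ℤ =>
      ‖T μ * (if P μ then ((N:ℂ))^n else 0) - (if μ = ν then T ν * (N:ℂ)^n else 0)‖) :=
    Summable.of_nonneg_of_le (fun _ => norm_nonneg _) hptwise (hgsumm.indicator _)
  have hdbound : ‖A - T ν * (N:ℂ)^n‖ ≤ ε * (N:ℝ)^n := by
    rw [← hdiff.tsum_eq]
    calc ‖∑' μ : Fin n → ℤ,
          (T μ * (if P μ then ((N:ℂ))^n else 0) - (if μ = ν then T ν * (N:ℂ)^n else 0))‖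
        ≤ ∑' μ : Fin n → ℤ,
          ‖T μ * (if P μ then ((N:ℂ))^n else 0) - (if μ = ν then T ν * (N:ℂ)^n else 0)‖ :=
          norm_tsum_le_tsum_norm hFnorm
    _ ≤ ∑' μ : Fin n → ℤ, ((s : Set (Fin n → ℤ))ᶜ).indicator g μ :=
          Summable.tsum_le_tsum hptwise hFnorm (hgsumm.indicator _)
    _ = ∑' μ : ↑((s : Set (Fin n → ℤ))ᶜ), g μ := (tsum_subtype _ g).symm
    _ = (∑' μ : ↑((s : Set (Fin n → ℤ))ᶜ), ‖T μ‖) * (N:ℝ)^n := by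
          rw [← tsum_mul_right]
    _ ≤ ε * (N:ℝ)^n := mul_le_mul_of_nonneg_right hs.le (by positivity)
  have h1 : ‖T ν * (N:ℂ)^n‖ = ‖T ν‖ * (N:ℝ)^n := by
    rw [norm_mul, norm_pow, Complex.norm_natCast]
  have h2 : ‖T ν * (N:ℂ)^n‖ ≤ ‖A‖ + ‖A - T ν * (N:ℂ)^n‖ := by
    calc ‖T ν * (N:ℂ)^n‖ = ‖A - (A - T ν * (N:ℂ)^n)‖ := by ring_nf
    _ ≤ ‖A‖ + ‖A - T ν * (N:ℂ)^n‖ := norm_sub_le _ _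
  have hNpos : (0:ℝ) < (N:ℝ)^n := by positivity
  have hfinal : ‖T ν‖ * (N:ℝ)^n ≤ (C + ε) * (N:ℝ)^n := by
    rw [← h1]
    calc ‖T ν * (N:ℂ)^n‖ ≤ ‖A‖ + ‖A - T ν * (N:ℂ)^n‖ := h2
    _ ≤ (N:ℝ)^n * C + ε * (N:ℝ)^n := add_le_add hAnorm hdbound
    _ = (C + ε) * (N:ℝ)^n := by ring
  exact le_of_mul_le_mul_right hfinal hNpos


/-- Laurent coefficients of bounded holomorphic functions vanish off `E(log G)^⊥`. -/
theorem stmt15 {n : ℕ} (G : Set (Fin n → ℂ)) (hdom : IsDomainSet G) (hcirc : IsCircled G)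
    (hDoH : IsDomainOfHolomorphy G) (f : (Fin n → ℂ) → ℂ) (hf : f ∈ Hinf G)
    (a : (Fin n → ℤ) → ℂ) (ha : HasLaurent G f a) :
    ∀ ν : Fin n → ℤ,
      (∃ v ∈ ESpace (logSet G), (∑ j, (ν j : ℝ) * v j) ≠ 0) → a ν = 0 := by

  obtain ⟨hGopen, hGconn⟩ := hdom
  obtain ⟨hfd, C, hC⟩ := hf
  rintro ν ⟨v, hv, hvν⟩
  obtain ⟨z₀, hz₀⟩ := hGconn.nonempty
  obtain ⟨r, hr, hball⟩ := Metric.isOpen_iff.mp hGopen z₀ hz₀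
  classical
  set z₁ : Fin n → ℂ := fun j => if z₀ j = 0 then ((r/2 : ℝ) : ℂ) else z₀ j with hz₁
  have hz₁G : z₁ ∈ G := by
    apply hball
    rw [Metric.mem_ball]
    refine (dist_pi_lt_iff hr).mpr fun j => ?_
    by_cases h : z₀ j = 0
    · have hz : z₁ j = ((r/2 : ℝ) : ℂ) := by rw [hz₁]; simp [h]
      rw [hz, h, Complex.dist_eq, sub_zero, Complex.norm_real, Real.norm_eq_abs, abs_of_pos (by linarith)]
      linarith
    · have hz : z₁ j = z₀ j := by rw [hz₁]; simp [h]
      simp [hz, dist_self, hr]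
  have hz₁ne : ∀ j, z₁ j ≠ 0 := by
    intro j
    by_cases h : z₀ j = 0
    · have hz : z₁ j = ((r/2 : ℝ) : ℂ) := by rw [hz₁]; simp [h]
      rw [hz]
      exact_mod_cast (by positivity : (r/2 : ℝ) ≠ 0)
    · have hz : z₁ j = z₀ j := by rw [hz₁]; simp [h]
      rw [hz]; exact h
  set x₀ : Fin n → ℝ := fun j => Real.log (‖z₁ j‖) with hx₀def
  have habs : ∀ j, 0 < ‖z₁ j‖ := fun j => norm_pos_iff.mpr (hz₁ne j)
  have hx₀ : x₀ ∈ logSet G := by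
    show (fun j => (Real.exp (x₀ j) : ℂ)) ∈ G
    have hrot := hcirc z₁ hz₁G (fun j => -(Complex.arg (z₁ j)))
    have key : ∀ w : ℂ, Complex.exp (((-(Complex.arg w) : ℝ) : ℂ) * Complex.I) * w
        = ((‖w‖ : ℝ) : ℂ) := by
      intro w
      set A := ‖w‖ with hA
      set θ := Complex.arg w with hθ
      have hw : ((A : ℝ) : ℂ) * Complex.exp ((θ : ℂ) * Complex.I) = w :=
        Complex.norm_mul_exp_arg_mul_I w
      rw [← hw, ← mul_assoc, mul_comm (Complex.exp _) ((A : ℝ) : ℂ), mul_assoc,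
        ← Complex.exp_add]
      have h0 : ((-θ : ℝ) : ℂ) * Complex.I + (θ : ℂ) * Complex.I = 0 := by push_cast; ring
      rw [h0, Complex.exp_zero, mul_one]
    have heq : (fun j => Complex.exp ((((-(Complex.arg (z₁ j))) : ℝ) : ℂ) * Complex.I) * z₁ j)
        = fun j => (Real.exp (x₀ j) : ℂ) := by
      funext j
      rw [hx₀def]
      simp only
      rw [Real.exp_log (habs j)]
      exact key (z₁ j)
    rw [heq] at hrot
    exact hrot
  have hC0 : 0 ≤ C := le_trans (norm_nonneg _) (hC z₁ hz₁G)
  by_contra haν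
  have hν0 : 0 < ‖a ν‖ := norm_pos_iff.mpr haν
  set sv : ℝ := ∑ j, (ν j : ℝ) * v j with hsv
  set t : ℝ := (Real.log ((C+1)/‖a ν‖) - ∑ j, (ν j:ℝ) * x₀ j)/sv with ht
  have hxt : (x₀ + t • v) ∈ logSet G := hv x₀ hx₀ t
  have hb := coeffBound hcirc ha hC ν hxt
  have hexp : ∑ j, (ν j : ℝ) * (x₀ + t • v) j = Real.log ((C+1)/‖a ν‖) := by
    have h1 : ∑ j, (ν j : ℝ) * (x₀ + t • v) j
        = (∑ j, (ν j:ℝ) * x₀ j) + t * sv := by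
      rw [hsv, Finset.mul_sum, ← Finset.sum_add_distrib]
      refine Finset.sum_congr rfl fun j _ => ?_
      simp only [Pi.add_apply, Pi.smul_apply, smul_eq_mul]
      ring
    rw [h1, ht]
    field_simp
    ring
  rw [hexp, Real.exp_log (by positivity : (0:ℝ) < (C+1)/‖a ν‖),
    mul_div_cancel₀ _ (ne_of_gt hν0)] at hb
  linarith
end
end

section
/- Let G ⊆ ℂ^n be an n-circled domain of holomorphy, F := E(log G), and let f ∈ H^{∞,1}(G). If ν = (ν_1,…,ν_n) ∈ ℤ^n satisfies ν_j ≠ 0 for some j and a_ν(f) ≠ 0, then the standard basis vector e_j belongs to F^⊥. -/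
open MeasureTheory Filter Topology Set
open scoped ENNReal

noncomputable section

section Aux16
open scoped Real

def eChar (m : ℤ) (t : ℝ) : ℂ := Complex.exp ((m : ℂ) * t * Complex.I)

lemma norm_eChar (m : ℤ) (t : ℝ) : ‖eChar m t‖ = 1 := by
  rw [eChar, Complex.norm_exp]
  norm_num [Complex.mul_re, Complex.mul_im]

lemma eChar_integral (m : ℤ) :
    ∫ t in Set.Icc (0:ℝ) (2*π), eChar m t = if m = 0 then ((2*π : ℝ) : ℂ) else 0 := by
  rw [MeasureTheory.integral_Icc_eq_integral_Ioc,
    ← intervalIntegral.integral_of_le Real.two_pi_pos.le]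
  rcases eq_or_ne m 0 with rfl | hm
  · simp [eChar]
  · have h1 : ∀ t : ℝ, eChar m t = Complex.exp (((m:ℂ)*Complex.I) * t) := fun t => by
      rw [eChar]; ring_nf
    simp_rw [h1]
    rw [integral_exp_mul_complex (mul_ne_zero (Int.cast_ne_zero.mpr hm) Complex.I_ne_zero)]
    have h2 : (m:ℂ) * Complex.I * ((2*π:ℝ):ℂ) = m * (2 * π * Complex.I) := by push_cast; ring
    rw [h2, Complex.exp_int_mul_two_pi_mul_I]
    simp [hm]

lemma integral_box_prod {n : ℕ} (h : Fin n → ℝ → ℂ) :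
    ∫ θ in Set.Icc (0 : Fin n → ℝ) (fun _ => 2*π), ∏ k, h k (θ k) =
      ∏ k, ∫ t in Set.Icc (0:ℝ) (2*π), h k t := by
  rw [← MeasureTheory.integral_indicator measurableSet_Icc]
  have hmem : ∀ θ : Fin n → ℝ, θ ∈ Set.Icc (0 : Fin n → ℝ) (fun _ => 2*π) ↔
      ∀ k, θ k ∈ Set.Icc (0:ℝ) (2*π) := by
    intro θ; simp [Set.mem_Icc, Pi.le_def, forall_and]
  have heq : ((Set.Icc (0 : Fin n → ℝ) (fun _ => 2*π)).indicator
      (fun θ => ∏ k, h k (θ k))) =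
      fun θ => ∏ k, (Set.Icc (0:ℝ) (2*π)).indicator (h k) (θ k) := by
    funext θ
    by_cases hθ : ∀ k, θ k ∈ Set.Icc (0:ℝ) (2*π)
    · rw [Set.indicator_of_mem ((hmem θ).mpr hθ)]
      exact Finset.prod_congr rfl fun k _ => (Set.indicator_of_mem (hθ k) _).symm
    · rw [Set.indicator_of_notMem (fun h' => hθ ((hmem θ).mp h'))]
      push_neg at hθ; obtain ⟨k, hk⟩ := hθ
      exact (Finset.prod_eq_zero (Finset.mem_univ k) (Set.indicator_of_notMem hk _)).symm
  rw [heq, MeasureTheory.integral_fintype_prod_volume_eq_prod (ι := Fin n)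
      (f := fun k => (Set.Icc (0:ℝ) (2*π)).indicator (h k))]
  exact Finset.prod_congr rfl fun k _ => (MeasureTheory.integral_indicator measurableSet_Icc)

lemma real_exp_zpow (x : ℝ) (m : ℤ) : Real.exp x ^ m = Real.exp (m * x) := by
  rw [← Real.rpow_intCast, Real.rpow_def_of_pos (Real.exp_pos x), Real.log_exp, mul_comm]

lemma bdd_exp {A B s : ℝ} (hA : 0 < A) (h : ∀ t : ℝ, A * Real.exp (t * s) ≤ B) : s = 0 := by
  by_contra hs
  have hB : 0 < B := lt_of_lt_of_le (by simpa using hA) (by simpa using h 0)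
  have := h ((Real.log (B / A) + 1) / s)
  rw [div_mul_cancel₀ _ hs, Real.exp_add, Real.exp_log (div_pos hB hA)] at this
  rw [← mul_assoc, mul_div_assoc'] at this
  have h2 : A * B / A = B := by field_simp
  rw [h2] at this
  nlinarith [Real.exp_one_gt_d9]

def tor {n : ℕ} (x θ : Fin n → ℝ) : Fin n → ℂ :=
  fun k => (Real.exp (x k) : ℂ) * Complex.exp ((θ k : ℂ) * Complex.I)

lemma tor_apply {n : ℕ} (x θ : Fin n → ℝ) (k : Fin n) :
    tor x θ k = (Real.exp (x k) : ℂ) * Complex.exp ((θ k : ℂ) * Complex.I) := rfl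

def Wt {n : ℕ} (ν : Fin n → ℤ) (θ : Fin n → ℝ) : ℂ := ∏ k, eChar (-(ν k)) (θ k)

lemma norm_Wt {n : ℕ} (ν : Fin n → ℤ) (θ : Fin n → ℝ) : ‖Wt ν θ‖ = 1 := by
  rw [Wt, norm_prod]
  simp only [norm_eChar, Finset.prod_const_one]

lemma continuous_eChar_comp {n : ℕ} (m : ℤ) (k : Fin n) :
    Continuous fun θ : Fin n → ℝ => eChar m (θ k) := by
  unfold eChar
  fun_prop

lemma continuous_Wt {n : ℕ} (ν : Fin n → ℤ) : Continuous (Wt ν) := by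
  unfold Wt
  exact continuous_finset_prod _ fun k _ => continuous_eChar_comp _ k

lemma continuous_tor {n : ℕ} (x : Fin n → ℝ) : Continuous (tor x) := by
  unfold tor
  fun_prop

lemma tor_mem {n : ℕ} {G : Set (Fin n → ℂ)} (hcirc : IsCircled G) {x : Fin n → ℝ}
    (hx : x ∈ logSet G) (θ : Fin n → ℝ) : tor x θ ∈ G := by
  have h := hcirc _ hx θ
  have heq : tor x θ = fun j => Complex.exp ((θ j : ℂ) * Complex.I) *
      (fun j => (Real.exp (x j) : ℂ)) j := by
    funext k; simp [tor, mul_comm]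
  rwa [heq]

lemma tor_zpow {n : ℕ} (x θ : Fin n → ℝ) (k : Fin n) (m : ℤ) :
    tor x θ k ^ m = ((Real.exp (x k) ^ m : ℝ) : ℂ) * eChar m (θ k) := by
  rw [tor, mul_zpow, Complex.ofReal_zpow]
  congr 1
  rw [eChar, ← Complex.exp_int_mul, mul_assoc]

lemma laurent_term_eq {n : ℕ} (a : (Fin n → ℤ) → ℂ) (x θ : Fin n → ℝ) (μ ν : Fin n → ℤ) :
    (a μ * ∏ k, tor x θ k ^ μ k) * Wt ν θ =
      (a μ * ((∏ k, Real.exp (x k) ^ μ k : ℝ) : ℂ)) * ∏ k, eChar (μ k - ν k) (θ k) := by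
  have h1 : ∀ k : Fin n, eChar (μ k - ν k) (θ k) = eChar (μ k) (θ k) * eChar (-(ν k)) (θ k) :=
    fun k => by
      rw [eChar, eChar, eChar, ← Complex.exp_add]; congr 1; push_cast; ring
  simp_rw [tor_zpow, h1, Finset.prod_mul_distrib, Complex.ofReal_prod, Wt]
  ring

instance boxFinite {n : ℕ} :
    IsFiniteMeasure (volume.restrict (Set.Icc (0 : Fin n → ℝ) (fun _ => 2*π))) :=
  ⟨by rw [Measure.restrict_apply_univ]; exact isCompact_Icc.measure_lt_top⟩

lemma box_measure_toReal {n : ℕ} :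
    (volume (Set.Icc (0 : Fin n → ℝ) (fun _ => 2*π))).toReal = (2*π)^n := by
  rw [Real.volume_Icc_pi_toReal (fun _ => by positivity)]
  simp [Finset.prod_const]

lemma coeff_integral {n : ℕ} {G : Set (Fin n → ℂ)} (hcirc : IsCircled G)
    {f : (Fin n → ℂ) → ℂ} {a : (Fin n → ℤ) → ℂ} (ha : HasLaurent G f a)
    (ν : Fin n → ℤ) {x : Fin n → ℝ} (hx : x ∈ logSet G) :
    ∫ θ in Set.Icc (0 : Fin n → ℝ) (fun _ => 2*π), f (tor x θ) * Wt ν θ =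
      (a ν * ((∏ k, Real.exp (x k) ^ ν k : ℝ) : ℂ)) * ((2*π : ℝ) : ℂ) ^ n := by
  set box := Set.Icc (0 : Fin n → ℝ) (fun _ => 2*π) with hbox
  set P : (Fin n → ℤ) → ℝ := fun μ => ∏ k, Real.exp (x k) ^ μ k with hP
  set F : (Fin n → ℤ) → (Fin n → ℝ) → ℂ :=
    fun μ θ => (a μ * ∏ k, tor x θ k ^ μ k) * Wt ν θ with hF
  have hPpos : ∀ μ, 0 < P μ := fun μ =>
    Finset.prod_pos fun k _ => zpow_pos (Real.exp_pos _) _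
  -- each term is integrable on the box
  have hcont : ∀ μ : Fin n → ℤ, Continuous (F μ) := by
    intro μ
    have : F μ = fun θ => (a μ * (P μ : ℂ)) * ∏ k, eChar (μ k - ν k) (θ k) := by
      funext θ; exact laurent_term_eq a x θ μ ν
    rw [this]
    exact continuous_const.mul (continuous_finset_prod _ fun k _ => continuous_eChar_comp _ k)
  have hint : ∀ μ : Fin n → ℤ, Integrable (F μ) (volume.restrict box) :=
    fun μ => (hcont μ).continuousOn.integrableOn_compact isCompact_Icc
  -- norm of each term is constant
  have hnrm : ∀ μ θ, ‖F μ θ‖ = ‖a μ‖ * P μ := by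
    intro μ θ
    show ‖(a μ * ∏ k, tor x θ k ^ μ k) * Wt ν θ‖ = ‖a μ‖ * P μ
    rw [laurent_term_eq a x θ μ ν, norm_mul, norm_prod]
    simp only [norm_eChar, Finset.prod_const_one, mul_one, norm_mul, Complex.norm_real,
      Real.norm_eq_abs, abs_of_pos (hPpos μ)]
    exact congrArg _ (abs_of_pos (hPpos μ))
  -- summability of the integrals of norms
  have hsumm : Summable fun μ : Fin n → ℤ => ‖a μ‖ * P μ := by
    have hc : (fun j : Fin n => (Real.exp (x j) : ℂ)) ∈ G := hx
    have h1 := (ha _ hc).summable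
    have h2 : Summable fun μ : Fin n → ℤ =>
        ‖a μ * ∏ k, ((Real.exp (x k) : ℂ)) ^ μ k‖ := summable_norm_iff.mpr h1
    have h3 : ∀ μ : Fin n → ℤ,
        ‖a μ * ∏ k, ((Real.exp (x k) : ℂ)) ^ μ k‖ = ‖a μ‖ * P μ := by
      intro μ
      rw [norm_mul]
      congr 1
      rw [show (∏ k, ((Real.exp (x k) : ℂ)) ^ μ k) = ((P μ : ℝ) : ℂ) by
        rw [hP, Complex.ofReal_prod]; exact Finset.prod_congr rfl fun k _ =>
          (Complex.ofReal_zpow _ _).symm]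
      simp [Complex.norm_real, abs_of_pos (hPpos μ)]
    exact h2.congr h3
  have hsumint : Summable fun μ : Fin n → ℤ =>
      ∫ θ in box, ‖F μ θ‖ ∂volume := by
    have : ∀ μ : Fin n → ℤ, ∫ θ in box, ‖F μ θ‖ ∂volume = (‖a μ‖ * P μ) * (2*π)^n := by
      intro μ
      simp_rw [hnrm μ]
      rw [integral_const, measureReal_def, Measure.restrict_apply_univ, box_measure_toReal, smul_eq_mul, mul_comm]
    rw [funext this]
    exact hsumm.mul_right _
  -- swap sum and integral
  have hswap := MeasureTheory.hasSum_integral_of_summable_integral_norm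
    (μ := volume.restrict box) hint hsumint
  -- identify the pointwise tsum
  have htsum : ∀ θ : Fin n → ℝ, (∑' μ, F μ θ) = f (tor x θ) * Wt ν θ := by
    intro θ
    exact ((ha _ (tor_mem hcirc hx θ)).mul_right (Wt ν θ)).tsum_eq
  -- compute each integral
  have hval : ∀ μ : Fin n → ℤ, ∫ θ in box, F μ θ =
      if μ = ν then (a ν * ((P ν : ℝ) : ℂ)) * ((2*π : ℝ) : ℂ) ^ n else 0 := by
    intro μ
    have h0 : ∫ θ in box, F μ θ =
        (a μ * ((P μ : ℝ) : ℂ)) * ∏ k, (if μ k - ν k = 0 then ((2*π : ℝ) : ℂ) else 0) := by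
      calc ∫ θ in box, F μ θ
          = ∫ θ in box, (a μ * ((P μ : ℝ) : ℂ)) * ∏ k, eChar (μ k - ν k) (θ k) := by
            exact integral_congr_ae (Filter.Eventually.of_forall fun θ =>
              laurent_term_eq a x θ μ ν)
        _ = (a μ * ((P μ : ℝ) : ℂ)) * ∫ θ in box, ∏ k, eChar (μ k - ν k) (θ k) := by
            rw [integral_const_mul]
        _ = (a μ * ((P μ : ℝ) : ℂ)) * ∏ k, ∫ t in Set.Icc (0:ℝ) (2*π), eChar (μ k - ν k) t := by
            rw [hbox, integral_box_prod]
        _ = _ := by rw [Finset.prod_congr rfl fun k _ => eChar_integral (μ k - ν k)]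
    rcases eq_or_ne μ ν with rfl | hμν
    · rw [h0, if_pos rfl]
      congr 1
      rw [Finset.prod_congr rfl fun k _ => if_pos (sub_self (μ k)), Finset.prod_const]
      simp
    · obtain ⟨k, hk⟩ := Function.ne_iff.mp hμν
      have hz : (∏ k, if μ k - ν k = 0 then ((2*π : ℝ) : ℂ) else 0) = 0 :=
        Finset.prod_eq_zero (Finset.mem_univ k) (if_neg (sub_ne_zero.mpr hk))
      rw [h0, if_neg hμν, hz, mul_zero]
  -- conclude
  have hfinal : HasSum (fun μ : Fin n → ℤ =>
      if μ = ν then (a ν * ((P ν : ℝ) : ℂ)) * ((2*π : ℝ) : ℂ) ^ n else 0)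
      (∫ θ in box, f (tor x θ) * Wt ν θ ∂volume) := by
    have := hswap
    rw [funext hval] at this
    simpa only [htsum] using this
  exact hfinal.unique (hasSum_ite_eq ν _)

lemma prod_exp_zpow {n : ℕ} (x : Fin n → ℝ) (ν : Fin n → ℤ) :
    (∏ k, Real.exp (x k) ^ ν k) = Real.exp (∑ k, (ν k : ℝ) * x k) := by
  rw [Real.exp_sum]
  exact Finset.prod_congr rfl fun k _ => real_exp_zpow _ _

lemma norm_circle_exp (t : ℝ) : ‖Complex.exp ((t : ℂ) * Complex.I)‖ = 1 := by
  rw [Complex.norm_exp]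
  norm_num [Complex.mul_re]

lemma coeff_bound {n : ℕ} {G : Set (Fin n → ℂ)} (hcirc : IsCircled G)
    {f : (Fin n → ℂ) → ℂ} {a : (Fin n → ℤ) → ℂ} (ha : HasLaurent G f a)
    {C : ℝ} (hC : ∀ z ∈ G, ‖f z‖ ≤ C)
    (ν : Fin n → ℤ) {x : Fin n → ℝ} (hx : x ∈ logSet G) :
    ‖a ν‖ * Real.exp (∑ k, (ν k : ℝ) * x k) ≤ C := by
  have hkey := coeff_integral hcirc ha ν hx
  have hb : ‖∫ θ in Set.Icc (0 : Fin n → ℝ) (fun _ => 2*π), f (tor x θ) * Wt ν θ‖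
      ≤ C * (2*π)^n := by
    have h1 := MeasureTheory.norm_integral_le_of_norm_le_const
      (μ := volume.restrict (Set.Icc (0 : Fin n → ℝ) (fun _ => 2*π))) (C := C)
      (f := fun θ => f (tor x θ) * Wt ν θ)
      (Filter.Eventually.of_forall fun θ => by
        rw [norm_mul, norm_Wt, mul_one]; exact hC _ (tor_mem hcirc hx θ))
    rwa [measureReal_def, Measure.restrict_apply_univ, box_measure_toReal] at h1
  rw [hkey] at hb
  have hP : (0:ℝ) < ∏ k, Real.exp (x k) ^ ν k :=
    Finset.prod_pos fun k _ => zpow_pos (Real.exp_pos _) _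
  rw [norm_mul, norm_mul, norm_pow, Complex.norm_real, Complex.norm_real,
    Real.norm_eq_abs, Real.norm_eq_abs, abs_of_pos hP,
    abs_of_pos Real.two_pi_pos] at hb
  rw [← prod_exp_zpow]
  exact le_of_mul_le_mul_right hb (pow_pos Real.two_pi_pos n)

lemma deriv_coeff_bound {n : ℕ} {G : Set (Fin n → ℂ)} (hG : IsOpen G) (hcirc : IsCircled G)
    {f : (Fin n → ℂ) → ℂ} {a : (Fin n → ℤ) → ℂ} (hfd : DifferentiableOn ℂ f G)
    (ha : HasLaurent G f a) (j : Fin n) {C' : ℝ} (hC' : ∀ z ∈ G, ‖pd n j f z‖ ≤ C')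
    (ν : Fin n → ℤ) {x : Fin n → ℝ} (hx : x ∈ logSet G) :
    |(ν j : ℝ)| * (‖a ν‖ * Real.exp (∑ k, (ν k : ℝ) * x k)) ≤ Real.exp (x j) * C' := by
  set box := Set.Icc (0 : Fin n → ℝ) (fun _ => 2*π) with hbox
  set S : ℝ := ∑ k, (ν k : ℝ) * x k with hS
  set e : Fin n → ℝ := fun k => if k = j then 1 else 0 with he
  set xt : ℝ → Fin n → ℝ := fun t k => x k + t * e k with hxt
  have hxt0 : xt 0 = x := by funext k; simp [hxt]
  have hlog : IsOpen (logSet G) := by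
    have h1 : logSet G = (fun x : Fin n → ℝ => (fun j => (Real.exp (x j) : ℂ))) ⁻¹' G := rfl
    rw [h1]
    exact hG.preimage (continuous_pi fun k =>
      Complex.continuous_ofReal.comp (Real.continuous_exp.comp (continuous_apply k)))
  have hcont_xt : Continuous xt := by
    apply continuous_pi
    intro k
    exact continuous_const.add (continuous_id.mul continuous_const)
  obtain ⟨δ, δpos, hδ⟩ : ∃ δ > 0, ∀ t : ℝ, t ∈ Metric.ball (0:ℝ) δ → xt t ∈ logSet G := by
    have h0 : (0:ℝ) ∈ xt ⁻¹' logSet G := by rw [Set.mem_preimage, hxt0]; exact hx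
    obtain ⟨δ, δpos, hb⟩ := Metric.isOpen_iff.mp (hlog.preimage hcont_xt) 0 h0
    exact ⟨δ, δpos, fun t ht => hb ht⟩
  set g := pd n j f with hg
  set F : ℝ → (Fin n → ℝ) → ℂ := fun t θ => f (tor (xt t) θ) * Wt ν θ with hF
  set F' : ℝ → (Fin n → ℝ) → ℂ := fun t θ =>
    ((((Real.exp (x j + t) : ℝ) : ℂ) * Complex.exp ((θ j : ℂ) * Complex.I)) *
      g (tor (xt t) θ)) * Wt ν θ with hF'
  have hmemG : ∀ t ∈ Metric.ball (0:ℝ) δ, ∀ θ, tor (xt t) θ ∈ G :=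
    fun t ht θ => tor_mem hcirc (hδ t ht) θ
  have hγ : ∀ (θ : Fin n → ℝ) (t : ℝ), HasDerivAt (fun t' => tor (xt t') θ)
      (Pi.single j (((Real.exp (x j + t) : ℝ) : ℂ) *
        Complex.exp ((θ j : ℂ) * Complex.I))) t := by
    intro θ t
    rw [hasDerivAt_pi]
    intro k
    rcases eq_or_ne k j with rfl | hk
    · have h1 : (fun t' => tor (xt t') θ k) =
          fun t' => ((Real.exp (x k + t') : ℝ) : ℂ) * Complex.exp ((θ k : ℂ) * Complex.I) := by
        funext t'; rw [tor_apply]; simp [hxt, he]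
      rw [h1, Pi.single_eq_same]
      have hre : HasDerivAt (fun t' : ℝ => Real.exp (x k + t')) (Real.exp (x k + t)) t := by
        simpa using ((hasDerivAt_id t).const_add (x k)).exp
      exact hre.ofReal_comp.mul_const _
    · have h1 : (fun t' => tor (xt t') θ k) = fun _ => tor x θ k := by
        funext t'; rw [tor_apply, tor_apply]; simp [hxt, he, hk]
      rw [h1, Pi.single_eq_of_ne hk]
      exact hasDerivAt_const t _
  have hdiff : ∀ θ : Fin n → ℝ, ∀ t ∈ Metric.ball (0:ℝ) δ,
      HasDerivAt (fun t' => F t' θ) (F' t θ) t := by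
    intro θ t ht
    have hz : tor (xt t) θ ∈ G := hmemG t ht θ
    have hfz : HasFDerivAt f ((fderiv ℂ f (tor (xt t) θ)).restrictScalars ℝ)
        (tor (xt t) θ) :=
      ((hfd.differentiableAt (hG.mem_nhds hz)).hasFDerivAt).restrictScalars ℝ
    have hcomp := hfz.comp_hasDerivAt t (hγ θ t)
    have hsingle : (Pi.single j (((Real.exp (x j + t) : ℝ) : ℂ) *
        Complex.exp ((θ j : ℂ) * Complex.I)) : Fin n → ℂ) =
        (((Real.exp (x j + t) : ℝ) : ℂ) * Complex.exp ((θ j : ℂ) * Complex.I)) •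
          (Pi.single j 1 : Fin n → ℂ) := by
      rw [← Pi.single_smul, smul_eq_mul, mul_one]
    have happ : ((fderiv ℂ f (tor (xt t) θ)).restrictScalars ℝ)
        (Pi.single j (((Real.exp (x j + t) : ℝ) : ℂ) *
          Complex.exp ((θ j : ℂ) * Complex.I))) =
        (((Real.exp (x j + t) : ℝ) : ℂ) * Complex.exp ((θ j : ℂ) * Complex.I)) *
          g (tor (xt t) θ) := by
      show (fderiv ℂ f (tor (xt t) θ)) (Pi.single j _) = _
      rw [hsingle, ContinuousLinearMap.map_smul, smul_eq_mul]
      rfl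
    rw [happ] at hcomp
    exact hcomp.mul_const (Wt ν θ)
  have hFcont : ∀ t ∈ Metric.ball (0:ℝ) δ, Continuous (F t) := by
    intro t ht
    exact (hfd.continuousOn.comp_continuous (continuous_tor (xt t)) (hmemG t ht)).mul
      (continuous_Wt ν)
  have hF_meas : ∀ᶠ t in 𝓝 (0:ℝ), AEStronglyMeasurable (F t) (volume.restrict box) := by
    filter_upwards [Metric.ball_mem_nhds 0 δpos] with t ht
    exact (hFcont t ht).aestronglyMeasurable
  have hF_int : Integrable (F 0) (volume.restrict box) :=
    (hFcont 0 (Metric.mem_ball_self δpos)).continuousOn.integrableOn_compact isCompact_Icc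
  have hgm : Measurable g := measurable_fderiv_apply_const ℂ f (Pi.single j 1)
  have hF'_meas : AEStronglyMeasurable (F' 0) (volume.restrict box) := by
    apply Measurable.aestronglyMeasurable
    apply Measurable.mul
    · apply Measurable.mul
      · exact (continuous_const.mul (Complex.continuous_exp.comp
          ((Complex.continuous_ofReal.comp (continuous_apply j)).mul
            continuous_const))).measurable
      · exact hgm.comp (continuous_tor (xt 0)).measurable
    · exact (continuous_Wt ν).measurable
  have hC'0 : 0 ≤ C' := le_trans (norm_nonneg _) (hC' _ (tor_mem hcirc hx (fun _ => 0)))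
  have hnF' : ∀ (t : ℝ) (θ : Fin n → ℝ),
      ‖F' t θ‖ = Real.exp (x j + t) * ‖g (tor (xt t) θ)‖ := by
    intro t θ
    rw [hF']
    simp only [norm_mul, norm_Wt, mul_one, Complex.norm_real,
      norm_circle_exp, Real.norm_eq_abs, Real.abs_exp]
  have hnormF' : ∀ t ∈ Metric.ball (0:ℝ) δ, ∀ θ,
      ‖F' t θ‖ ≤ Real.exp (x j + δ) * C' := by
    intro t ht θ
    rw [hnF']
    have ht' : t ≤ δ := le_of_lt (lt_of_abs_lt (by simpa [Real.dist_eq] using ht))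
    exact mul_le_mul (Real.exp_le_exp.mpr (by linarith)) (hC' _ (hmemG t ht θ))
      (norm_nonneg _) (Real.exp_pos _).le
  have hbound : ∀ᵐ θ ∂(volume.restrict box), ∀ t ∈ Metric.ball (0:ℝ) δ,
      ‖F' t θ‖ ≤ Real.exp (x j + δ) * C' :=
    Filter.Eventually.of_forall fun θ t ht => hnormF' t ht θ
  have hbi : Integrable (fun _ : Fin n → ℝ => Real.exp (x j + δ) * C')
      (volume.restrict box) := integrable_const _
  obtain ⟨-, hD⟩ := hasDerivAt_integral_of_dominated_loc_of_deriv_le (Metric.ball_mem_nhds 0 δpos) hF_meas hF_int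
    hF'_meas hbound hbi
    (Filter.Eventually.of_forall fun θ t ht => hdiff θ t ht)
  have hsum_xt : ∀ t : ℝ, (∑ k, (ν k : ℝ) * xt t k) = S + t * ν j := by
    intro t
    have h1 : ∀ k, (ν k : ℝ) * xt t k = (ν k : ℝ) * x k +
        (if k = j then (ν j : ℝ) * t else 0) := by
      intro k
      rcases eq_or_ne k j with rfl | hk
      · simp [hxt, he]; ring
      · simp [hxt, he, hk]
    rw [Finset.sum_congr rfl fun k _ => h1 k, Finset.sum_add_distrib,
      Finset.sum_ite_eq' Finset.univ j (fun _ => (ν j : ℝ) * t)]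
    simp [hS]
    ring
  have hIeq : ∀ t ∈ Metric.ball (0:ℝ) δ, (∫ θ in box, F t θ) =
      (a ν * ((Real.exp (S + t * ν j) : ℝ) : ℂ)) * ((2*π : ℝ) : ℂ) ^ n := by
    intro t ht
    have h2 := coeff_integral hcirc ha ν (hδ t ht)
    rw [prod_exp_zpow, hsum_xt t] at h2
    exact h2
  have hψ : HasDerivAt (fun t : ℝ => (a ν * ((Real.exp (S + t * ν j) : ℝ) : ℂ)) *
      ((2*π : ℝ) : ℂ) ^ n)
      ((a ν * ((Real.exp S * ν j : ℝ) : ℂ)) * ((2*π : ℝ) : ℂ) ^ n) 0 := by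
    have h1 : HasDerivAt (fun t : ℝ => S + t * (ν j : ℝ)) ((ν j : ℝ)) 0 := by
      simpa using ((hasDerivAt_id (0:ℝ)).mul_const ((ν j : ℝ))).const_add S
    have h2 := (h1.exp.ofReal_comp.const_mul (a ν)).mul_const (((2*π : ℝ) : ℂ) ^ n)
    simpa using h2
  have hψ' : HasDerivAt (fun t => ∫ θ in box, F t θ)
      ((a ν * ((Real.exp S * ν j : ℝ) : ℂ)) * ((2*π : ℝ) : ℂ) ^ n) 0 := by
    apply hψ.congr_of_eventuallyEq
    filter_upwards [Metric.ball_mem_nhds 0 δpos] with t ht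
    exact hIeq t ht
  have hDeq : (∫ θ in box, F' 0 θ) =
      (a ν * ((Real.exp S * ν j : ℝ) : ℂ)) * ((2*π : ℝ) : ℂ) ^ n := hD.unique hψ'
  have hb : ‖∫ θ in box, F' 0 θ‖ ≤ (Real.exp (x j) * C') * (2*π)^n := by
    have h1 := MeasureTheory.norm_integral_le_of_norm_le_const
      (μ := volume.restrict box) (C := Real.exp (x j) * C') (f := F' 0)
      (Filter.Eventually.of_forall fun θ => by
        rw [hnF' 0 θ]
        have h2 : x j + 0 = x j := by ring
        rw [h2]
        exact mul_le_mul_of_nonneg_left (hC' _ (hmemG 0 (Metric.mem_ball_self δpos) θ))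
          (Real.exp_pos _).le)
    rwa [measureReal_def, Measure.restrict_apply_univ, hbox, box_measure_toReal] at h1
  rw [hDeq] at hb
  have hnrm2 : ‖(a ν * ((Real.exp S * ν j : ℝ) : ℂ)) * ((2*π : ℝ) : ℂ) ^ n‖ =
      (‖a ν‖ * (Real.exp S * |(ν j : ℝ)|)) * (2*π)^n := by
    rw [norm_mul, norm_mul, norm_pow, Complex.norm_real, Complex.norm_real,
      Real.norm_eq_abs, Real.norm_eq_abs, abs_of_pos Real.two_pi_pos, abs_mul, Real.abs_exp]
  rw [hnrm2] at hb
  have h3 := le_of_mul_le_mul_right hb (pow_pos Real.two_pi_pos n)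
  calc |(ν j : ℝ)| * (‖a ν‖ * Real.exp S) = ‖a ν‖ * (Real.exp S * |(ν j : ℝ)|) := by ring
    _ ≤ Real.exp (x j) * C' := h3

lemma pdM_zero {n : ℕ} (f : (Fin n → ℂ) → ℂ) : pdM n 0 f = f := by
  unfold pdM
  induction List.finRange n with
  | nil => rfl
  | cons i t ih => simpa using ih

lemma pdM_single {n : ℕ} (j : Fin n) (f : (Fin n → ℂ) → ℂ) :
    pdM n (Pi.single j 1) f = pd n j f := by
  unfold pdM
  have key : ∀ l : List (Fin n), l.Nodup →
      List.foldr (fun i g => (pd n i)^[(Pi.single j 1 : Fin n → ℕ) i] g) f l =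
        if j ∈ l then pd n j f else f := by
    intro l
    induction l with
    | nil => intro _; simp
    | cons i t ih =>
      intro hl
      rw [List.foldr_cons, ih (List.nodup_cons.mp hl).2]
      rcases eq_or_ne i j with rfl | hij
      · have hnot : i ∉ t := (List.nodup_cons.mp hl).1
        simp [hnot, Pi.single_eq_same]
      · have h0 : (Pi.single j 1 : Fin n → ℕ) i = 0 := Pi.single_eq_of_ne hij 1
        rw [h0]
        simp [List.mem_cons, Ne.symm hij]
  rw [key _ (List.nodup_finRange n), if_pos (List.mem_finRange j)]

lemma logSet_nonempty {n : ℕ} {G : Set (Fin n → ℂ)} (hG : IsOpen G) (hne : G.Nonempty)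
    (hcirc : IsCircled G) : ∃ x, x ∈ logSet G := by
  obtain ⟨z₀, hz₀⟩ := hne
  obtain ⟨ε, εpos, hball⟩ := Metric.isOpen_iff.mp hG z₀ hz₀
  set z : Fin n → ℂ := fun k => if z₀ k = 0 then ((ε/2 : ℝ) : ℂ) else z₀ k with hz
  have hzG : z ∈ G := by
    apply hball
    rw [Metric.mem_ball, dist_pi_lt_iff εpos]
    intro k
    rw [hz]
    by_cases h : z₀ k = 0
    · simp only [h, if_pos]
      rw [dist_eq_norm, sub_zero, Complex.norm_real, Real.norm_eq_abs,
        abs_of_pos (by positivity)]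
      linarith
    · simp [h, εpos]
  have hznz : ∀ k, z k ≠ 0 := by
    intro k
    rw [hz]
    by_cases h : z₀ k = 0
    · simp only [h, if_pos]
      exact Complex.ofReal_ne_zero.mpr (by positivity)
    · simpa [h] using h
  refine ⟨fun k => Real.log (‖z k‖), ?_⟩
  show (fun k => (Real.exp (Real.log (‖z k‖)) : ℂ)) ∈ G
  have hrot := hcirc z hzG (fun k => -Complex.arg (z k))
  have hk : ∀ k, Complex.exp (((-Complex.arg (z k) : ℝ) : ℂ) * Complex.I) * z k =
      ((‖z k‖ : ℝ) : ℂ) := by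
    intro k
    rw [Complex.ofReal_neg, neg_mul, Complex.exp_neg,
      inv_mul_eq_iff_eq_mul₀ (Complex.exp_ne_zero _), mul_comm]
    exact (Complex.norm_mul_exp_arg_mul_I (z k)).symm
  have heq : (fun k => (Real.exp (Real.log (‖z k‖)) : ℂ)) =
      (fun k => Complex.exp (((fun k => -Complex.arg (z k)) k : ℝ) * Complex.I) * z k) := by
    funext k
    rw [hk k, Real.exp_log (norm_pos_iff.mpr (hznz k))]
  rw [heq]
  exact hrot

end Aux16

/-- For `f ∈ H^{∞,1}(G)`: if `ν_j ≠ 0` and `a_ν(f) ≠ 0` then `e_j ∈ E(log G)^⊥`. -/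
theorem stmt16 {n : ℕ} (G : Set (Fin n → ℂ)) (hdom : IsDomainSet G) (hcirc : IsCircled G)
    (hDoH : IsDomainOfHolomorphy G) (f : (Fin n → ℂ) → ℂ) (hf : f ∈ HinfK G 1)
    (a : (Fin n → ℤ) → ℂ) (ha : HasLaurent G f a) :
    ∀ ν : Fin n → ℤ, ∀ j : Fin n, ν j ≠ 0 → a ν ≠ 0 →
      ∀ v ∈ ESpace (logSet G), v j = 0 := by
  intro ν j hνj haν v hv
  obtain ⟨hfd, hbounds⟩ := hf
  obtain ⟨C, hC⟩ := hbounds 0 (by simp)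
  have hC' : ∀ z ∈ G, ‖f z‖ ≤ C := fun z hz => by
    have := hC z hz; rwa [pdM_zero] at this
  obtain ⟨C', hCd⟩ := hbounds (Pi.single j 1) (by simp)
  have hCd' : ∀ z ∈ G, ‖pd n j f z‖ ≤ C' := fun z hz => by
    have := hCd z hz; rwa [pdM_single] at this
  have hG : IsOpen G := hdom.1
  obtain ⟨x₀, hx₀⟩ := logSet_nonempty hG hdom.2.nonempty hcirc
  set S₀ : ℝ := ∑ k, (ν k : ℝ) * x₀ k with hS₀
  set s : ℝ := ∑ k, (ν k : ℝ) * v k with hs_def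
  have hxl : ∀ t : ℝ, x₀ + t • v ∈ logSet G := fun t => hv x₀ hx₀ t
  have hsum : ∀ t : ℝ, (∑ k, (ν k : ℝ) * (x₀ + t • v) k) = S₀ + t * s := by
    intro t
    simp only [Pi.add_apply, Pi.smul_apply, smul_eq_mul, mul_add, Finset.sum_add_distrib]
    congr 1
    rw [Finset.mul_sum]
    exact Finset.sum_congr rfl fun k _ => by ring
  have haνn : (0:ℝ) < ‖a ν‖ := norm_pos_iff.mpr haν
  have hs : s = 0 := by
    apply bdd_exp (A := ‖a ν‖ * Real.exp S₀) (mul_pos haνn (Real.exp_pos _))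
    intro t
    have h1 := coeff_bound hcirc ha hC' ν (hxl t)
    rw [hsum t, Real.exp_add, ← mul_assoc] at h1
    exact h1
  have hνjn : (0:ℝ) < |(ν j : ℝ)| := abs_pos.mpr (Int.cast_ne_zero.mpr hνj)
  have hs2 : s - v j = 0 := by
    apply bdd_exp (A := |(ν j : ℝ)| * ‖a ν‖ * Real.exp (S₀ - x₀ j))
      (mul_pos (mul_pos hνjn haνn) (Real.exp_pos _))
    intro t
    have h2 := deriv_coeff_bound hG hcirc hfd ha j hCd' ν (hxl t)
    rw [hsum t] at h2
    have hvj : (x₀ + t • v) j = x₀ j + t * v j := by simp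
    rw [hvj] at h2
    have hE : (0:ℝ) < Real.exp (x₀ j + t * v j) := Real.exp_pos _
    have hexp : Real.exp (S₀ - x₀ j) * (Real.exp (t * (s - v j)) *
        Real.exp (x₀ j + t * v j)) = Real.exp (S₀ + t * s) := by
      rw [← Real.exp_add, ← Real.exp_add]; congr 1; ring
    have h3 : (|(ν j : ℝ)| * ‖a ν‖ * Real.exp (S₀ - x₀ j) * Real.exp (t * (s - v j))) *
        Real.exp (x₀ j + t * v j) ≤ C' * Real.exp (x₀ j + t * v j) := by
      calc (|(ν j : ℝ)| * ‖a ν‖ * Real.exp (S₀ - x₀ j) * Real.exp (t * (s - v j))) *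
            Real.exp (x₀ j + t * v j)
          = |(ν j : ℝ)| * ‖a ν‖ * (Real.exp (S₀ - x₀ j) * (Real.exp (t * (s - v j)) *
            Real.exp (x₀ j + t * v j))) := by ring
        _ = |(ν j : ℝ)| * (‖a ν‖ * Real.exp (S₀ + t * s)) := by rw [hexp]; ring
        _ ≤ Real.exp (x₀ j + t * v j) * C' := h2
        _ = C' * Real.exp (x₀ j + t * v j) := mul_comm _ _
    exact le_of_mul_le_mul_right h3 hE
  linarith
end
end

section
/- Let G ⊆ ℂ^n be an n-circled H^∞(G)-domain of holomorphy such that for every ε ∈ {0,1}^n with V_ε ∩ ∂G ≠ ∅ one has G_ε ⊆ G. Let α ∈ ℤ^n be such that the monomial z^α is a bounded holomorphic function on G (in particular z_j ≠ 0 on G whenever α_j < 0). Then z_j ≠ 0 on cl G for every j with α_j < 0; consequently z^α extends holomorphically to an open neighbourhood of cl G, i.e., z^α ∈ O(cl G). -/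
open MeasureTheory Filter Topology Set
open scoped ENNReal

noncomputable section

/-- Bounded monomials on such `G` extend holomorphically past `cl G`. -/
theorem stmt17 {n : ℕ} (G : Set (Fin n → ℂ)) (hdom : IsDomainSet G) (hcirc : IsCircled G)
    (hDoH : IsDomainOfHolomorphyFor G (Hinf G))
    (hGeps : ∀ ε : Fin n → Bool, (Veps ε ∩ frontier G).Nonempty → Geps G ε ⊆ G)
    (α : Fin n → ℤ) (hα : ∀ j, α j < 0 → ∀ z ∈ G, z j ≠ 0)
    (hbdd : (fun z : Fin n → ℂ => ∏ j, z j ^ α j) ∈ Hinf G) :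
    (∀ j, α j < 0 → ∀ z ∈ closure G, z j ≠ 0) ∧
    (fun z : Fin n → ℂ => ∏ j, z j ^ α j) ∈ Ocl G := by
  obtain ⟨z₀, hz₀⟩ := hdom.2.1
  have h1 : ∀ j, α j < 0 → ∀ z ∈ closure G, z j ≠ 0 := by
    intro j hj w hw hwj
    have hwG : w ∉ G := fun h => hα j hj w h hwj
    have hfr : w ∈ frontier G := by
      rw [frontier, hdom.1.interior_eq]
      exact ⟨hw, hwG⟩
    set ε : Fin n → Bool := fun k => decide (w k = 0) with hε
    have hwV : w ∈ Veps ε := by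
      intro k
      constructor
      · intro h; simpa using of_decide_eq_true h
      · intro h; simpa using of_decide_eq_false h
    have hsub := hGeps ε ⟨w, hwV, hfr⟩
    set lam : Fin n → ℂ := fun k => if k = j then 0 else 1 with hlam
    have hmem : (fun k => (if ε k then lam k else 1) * z₀ k) ∈ Geps G ε := by
      refine ⟨lam, z₀, ?_, hz₀, rfl⟩
      intro k; simp [hlam]; split <;> simp
    have := hα j hj _ (hsub hmem)
    apply this
    have hεj : ε j = true := by simp [hε, hwj]
    simp [hεj, hlam]
  refine ⟨h1, ?_⟩
  set U : Set (Fin n → ℂ) := ⋂ j, {z : Fin n → ℂ | α j < 0 → z j ≠ 0} with hU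
  have hUopen : IsOpen U := by
    apply isOpen_iInter_of_finite
    intro j
    by_cases hj : α j < 0
    · have : {z : Fin n → ℂ | α j < 0 → z j ≠ 0} = (fun z : Fin n → ℂ => z j) ⁻¹' {0}ᶜ := by
        ext z; simp [hj]
      rw [this]
      exact (isOpen_compl_singleton).preimage (continuous_apply j)
    · have : {z : Fin n → ℂ | α j < 0 → z j ≠ 0} = Set.univ := by
        ext z; simp [hj]
      rw [this]; exact isOpen_univ
  refine ⟨U, hUopen, ?_, (fun z : Fin n → ℂ => ∏ j, z j ^ α j), ?_, fun z _ => rfl⟩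
  · intro w hw
    exact Set.mem_iInter.2 fun j hj => h1 j hj w hw
  · intro z hz
    apply DifferentiableAt.differentiableWithinAt
    have hfac : ∀ j : Fin n, DifferentiableAt ℂ (fun z : Fin n → ℂ => z j ^ α j) z := by
      intro j
      have hdj : DifferentiableAt ℂ (fun z : Fin n → ℂ => z j) z :=
        (ContinuousLinearMap.proj j : (Fin n → ℂ) →L[ℂ] ℂ).differentiableAt
      apply hdj.zpow
      by_cases hj : α j < 0
      · exact Or.inl (Set.mem_iInter.1 hz j hj)
      · exact Or.inr (not_lt.1 hj)
    classical
    have key : ∀ s : Finset (Fin n),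
        DifferentiableAt ℂ (fun z : Fin n → ℂ => ∏ j ∈ s, z j ^ α j) z := by
      intro s
      induction s using Finset.induction_on with
      | empty => simpa using differentiableAt_const (1 : ℂ)
      | insert _ _ h ih =>
        simp only [Finset.prod_insert h]
        exact (hfac _).mul ih
    exact key Finset.univ
end
end
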